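/- arXiv:1704.01295 — 6 statements merged into one kernel-verified Lean document; each statement's English description precedes it below -/
import Mathlib

section
/- For positive integers m and n, the multiple sum over weakly increasing sequences 1 ≤ k₁ ≤ k₂ ≤ ⋯ ≤ kₘ ≤ n of the product ∏_{i=0}^{m} k_i (n+m-i)^{k_{i+1}-k_i} (with the conventions k₀ = 1 and k_{m+1} = n) equals C(n+m-1, m) · n^{n+m-1}. -/
def FF (n : ℕ) : ℕ → ℕ → ℕ
  | 0, a => n ^ (n - a)
  | r+1, a => ∑ k ∈ Finset.Icc a n, (n + (r+1)) ^ (k - a) * (k * FF n r k)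



lemma binom_helper (d r : ℕ) : (r+1) * Nat.choose (d+r+1) (r+1) = (d+1) * Nat.choose (d+r+1) r := by
  have h1 := Nat.add_one_mul_choose_eq (d+r) r
  have h2 := Nat.add_one_mul_choose_eq (d+r) d
  have h3 : Nat.choose (d+r) d = Nat.choose (d+r) r := by
    rw [← Nat.choose_symm (by omega : r ≤ d + r)]
    congr 1; omega
  have e1 : d + r + 1 = (d+r).succ := rfl
  rw [e1]
  have h2' : (d + r).succ * Nat.choose (d+r) d = Nat.choose (d+r).succ (d+1) * (d+1) := h2
  have hsym : Nat.choose (d+r).succ r = Nat.choose (d+r).succ (d+1) := by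
    rw [← Nat.choose_symm (by omega : r ≤ (d+r).succ)]
    congr 1; omega
  calc (r+1) * Nat.choose (d+r).succ (r+1) = Nat.choose (d+r).succ (r.succ) * (r.succ) := by rw [mul_comm]
    _ = (d+r).succ * Nat.choose (d+r) r := (Nat.add_one_mul_choose_eq (d+r) r).symm
    _ = (d+r).succ * Nat.choose (d+r) d := by rw [h3]
    _ = Nat.choose (d+r).succ (d+1) * (d+1) := h2'
    _ = (d+1) * Nat.choose (d+r).succ r := by rw [hsym]; ring

lemma key (n r : ℕ) (hn : 0 < n) : ∀ d, d < n →
    ∑ k ∈ Finset.Icc (n - d) n, (n + (r+1)) ^ (k - (n - d)) *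
      (k * (Nat.choose (n - k + r) r * n ^ (n - k + r)))
    = Nat.choose (d + r + 1) (r + 1) * n ^ (d + r + 1) := by
  intro d
  induction d with
  | zero =>
    intro _
    simp only [Nat.sub_zero, Finset.Icc_self, Finset.sum_singleton, Nat.sub_self, pow_zero,
      one_mul, Nat.choose_self, Nat.zero_add, Nat.choose_self]
    ring
  | succ d ih =>
    intro hd
    have hd' : d < n := by omega
    have hins : Finset.Icc (n - (d+1)) n = insert (n - (d+1)) (Finset.Icc (n - d) n) := by
      ext x
      simp only [Finset.mem_Icc, Finset.mem_insert]
      omega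
    rw [hins, Finset.sum_insert (by simp only [Finset.mem_Icc]; omega)]
    have hsub : n - (n - (d+1)) = d + 1 := by omega
    rw [Nat.sub_self, pow_zero, one_mul, hsub]
    have hshift : ∀ k ∈ Finset.Icc (n - d) n,
        (n + (r+1)) ^ (k - (n - (d+1))) * (k * (Nat.choose (n - k + r) r * n ^ (n - k + r)))
        = (n + (r+1)) * ((n + (r+1)) ^ (k - (n - d)) * (k * (Nat.choose (n - k + r) r * n ^ (n - k + r)))) := by
      intro k hk
      simp only [Finset.mem_Icc] at hk
      have : k - (n - (d+1)) = (k - (n - d)) + 1 := by omega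
      rw [this, pow_succ]
      ring
    rw [Finset.sum_congr rfl hshift, ← Finset.mul_sum, ih hd']
    have e1 : d + 1 + r = d + r + 1 := by omega
    rw [e1]
    obtain ⟨c, hc⟩ : ∃ c, n = c + (d + 1) := ⟨n - (d+1), by omega⟩
    subst hc
    have hcancel : c + (d + 1) - (d + 1) = c := by omega
    rw [hcancel]
    have hpasc : Nat.choose (d + 1 + r + 1) (r + 1)
        = Nat.choose (d+r+1) r + Nat.choose (d+r+1) (r+1) := by
      have h := Nat.choose_succ_succ (d+r+1) r
      have e : d + 1 + r + 1 = (d + r + 1) + 1 := by omega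
      rw [e, h]
    have hb := binom_helper d r
    have epow : d + 1 + r + 1 = (d + r + 1) + 1 := by omega
    rw [Nat.choose_succ_succ (d+r+1) r, pow_succ]
    zify at hb ⊢
    linear_combination ((c:ℤ) + d + 1) ^ (d + r + 1) * hb

lemma FF_eq (n : ℕ) (hn : 0 < n) : ∀ r a, 1 ≤ a → a ≤ n →
    FF n r a = Nat.choose (n - a + r) r * n ^ (n - a + r) := by
  intro r
  induction r with
  | zero => intro a _ _; simp [FF]
  | succ r ih =>
    intro a ha han
    have hstep : ∀ k ∈ Finset.Icc a n,
        (n + (r+1)) ^ (k - a) * (k * FF n r k)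
        = (n + (r+1)) ^ (k - a) * (k * (Nat.choose (n - k + r) r * n ^ (n - k + r))) := by
      intro k hk
      simp only [Finset.mem_Icc] at hk
      rw [ih k (by omega) hk.2]
    have hd : n - a < n := by omega
    have hna : n - (n - a) = a := by omega
    have h := key n r hn (n - a) hd
    rw [hna] at h
    rw [show FF n (r+1) a = ∑ k ∈ Finset.Icc a n, (n + (r+1)) ^ (k - a) * (k * FF n r k) from rfl,
      Finset.sum_congr rfl hstep, h]
    rfl

open Classical in
lemma aux (n : ℕ) (hn : 0 < n) : ∀ (r : ℕ) (a : ℕ), 1 ≤ a → a ≤ n →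
    ∑ K ∈ Finset.univ.filter (fun K : Fin (r + 2) → Fin (n + 1) =>
        (K 0 : ℕ) = a ∧ (K (Fin.last (r + 1)) : ℕ) = n ∧ Monotone K),
      ∏ i : Fin (r + 1),
        (K i.castSucc : ℕ) * (n + r - (i : ℕ)) ^ ((K i.succ : ℕ) - (K i.castSucc : ℕ))
    = a * FF n r a := by
  intro r
  induction r with
  | zero =>
    intro a ha han
    have hset : (Finset.univ.filter (fun K : Fin 2 → Fin (n + 1) =>
        (K 0 : ℕ) = a ∧ (K (Fin.last 1) : ℕ) = n ∧ Monotone K))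
        = { ![(⟨a, by omega⟩ : Fin (n+1)), ⟨n, by omega⟩] } := by
      ext K
      simp only [Finset.mem_filter, Finset.mem_univ, true_and, Finset.mem_singleton]
      constructor
      · rintro ⟨h0, h1, -⟩
        funext i
        fin_cases i
        · exact Fin.ext h0
        · exact Fin.ext h1
      · rintro rfl
        refine ⟨rfl, rfl, ?_⟩
        rw [monotone_vecCons]
        exact ⟨by simp [Fin.le_def]; omega, monotone_vecEmpty⟩
    rw [hset, Finset.sum_singleton]
    simp [FF]
  | succ r ihr =>
    intro a ha han
    rw [← Finset.sum_fiberwise_of_maps_to (g := fun K : Fin (r+1+2) → Fin (n+1) => K 1)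
      (t := Finset.univ) (fun K _ => Finset.mem_univ _)]
    have hfib : ∀ b : Fin (n + 1),
        ∑ K ∈ (Finset.univ.filter (fun K : Fin (r + 1 + 2) → Fin (n + 1) =>
            (K 0 : ℕ) = a ∧ (K (Fin.last (r + 1 + 1)) : ℕ) = n ∧ Monotone K)).filter
            (fun K => K 1 = b),
          ∏ i : Fin (r + 1 + 1),
            (K i.castSucc : ℕ) * (n + (r + 1) - (i : ℕ)) ^ ((K i.succ : ℕ) - (K i.castSucc : ℕ))
        = if a ≤ (b : ℕ) then
            a * ((n + (r+1)) ^ ((b : ℕ) - a) * ((b : ℕ) * FF n r (b : ℕ))) else 0 := by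
      intro b
      by_cases hab : a ≤ (b : ℕ)
      · rw [if_pos hab]
        -- bijection with tails
        rw [Finset.sum_nbij' (i := fun K => fun j : Fin (r+2) => K j.succ)
          (j := fun T => Fin.cons (⟨a, by omega⟩ : Fin (n+1)) T)
          (s := _) (t := (Finset.univ.filter (fun T : Fin (r + 2) → Fin (n + 1) =>
            (T 0 : ℕ) = (b : ℕ) ∧ (T (Fin.last (r + 1)) : ℕ) = n ∧ Monotone T)))
          (g := fun T => (a * (n + (r+1)) ^ ((b : ℕ) - a)) *
            ∏ i : Fin (r + 1),
              (T i.castSucc : ℕ) * (n + r - (i : ℕ)) ^ ((T i.succ : ℕ) - (T i.castSucc : ℕ)))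
          ?_ ?_ ?_ ?_ ?_]
        · rw [← Finset.mul_sum, ihr (b : ℕ) (by omega) (by omega)]
          ring
        · -- forward membership
          intro K hK
          simp only [Finset.mem_filter, Finset.mem_univ, true_and] at hK ⊢
          obtain ⟨⟨h0, hl, hmono⟩, h1⟩ := hK
          refine ⟨?_, ?_, ?_⟩
          · rw [show (0 : Fin (r+2)).succ = 1 from rfl, h1]
          · rw [show (Fin.last (r+1)).succ = Fin.last (r+1+1) from Fin.succ_last _, hl]
          · exact hmono.comp (Fin.strictMono_succ).monotone
        · -- backward membership
          intro T hT
          simp only [Finset.mem_filter, Finset.mem_univ, true_and] at hT ⊢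
          obtain ⟨h0, hl, hmono⟩ := hT
          refine ⟨⟨?_, ?_, ?_⟩, ?_⟩
          · simp [Fin.cons_zero]
          · rw [show (Fin.last (r+1+1)) = (Fin.last (r+1)).succ from (Fin.succ_last _).symm,
              Fin.cons_succ, hl]
          · exact monotone_vecCons.mpr ⟨by simp only [Fin.le_def, Fin.val_mk]; omega, hmono⟩
          · rw [show (1 : Fin (r+1+2)) = (0 : Fin (r+2)).succ from rfl, Fin.cons_succ]
            exact Fin.ext (by simpa using h0)
        · -- left inverse
          intro K hK
          simp only [Finset.mem_filter, Finset.mem_univ, true_and] at hK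
          obtain ⟨⟨h0, -, -⟩, -⟩ := hK
          have : (⟨a, by omega⟩ : Fin (n+1)) = K 0 := Fin.ext (by simpa using h0.symm)
          rw [this]
          exact Fin.cons_self_tail K
        · -- right inverse
          intro T hT
          funext j
          exact Fin.cons_succ _ _ _
        · -- value equality
          intro K hK
          simp only [Finset.mem_filter, Finset.mem_univ, true_and] at hK
          obtain ⟨⟨h0, hl, hmono⟩, h1⟩ := hK
          rw [Fin.prod_univ_succ]
          have hf0 : ((K (0 : Fin (r+1+1)).castSucc : ℕ) *
              (n + (r + 1) - ((0 : Fin (r+1+1)) : ℕ)) ^ ((K (0 : Fin (r+1+1)).succ : ℕ) - (K (0 : Fin (r+1+1)).castSucc : ℕ)))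
              = a * (n + (r+1)) ^ ((b : ℕ) - a) := by
            rw [show (0 : Fin (r+1+1)).castSucc = 0 from rfl, show (0 : Fin (r+1+1)).succ = 1 from rfl, h0, h1]
            simp
          rw [hf0]
          congr 1
          apply Finset.prod_congr rfl
          intro i _
          have e1 : (i.succ).castSucc = (i.castSucc).succ := (Fin.succ_castSucc i).symm
          have e2 : n + (r + 1) - ((i.succ : Fin (r+1+1)) : ℕ) = n + r - (i : ℕ) := by
            rw [Fin.val_succ]; omega
          rw [e1, e2]
      · rw [if_neg hab]
        apply Finset.sum_eq_zero
        intro K hK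
        simp only [Finset.mem_filter, Finset.mem_univ, true_and] at hK
        obtain ⟨⟨h0, hl, hmono⟩, h1⟩ := hK
        exfalso
        have := hmono (show (0 : Fin (r+1+2)) ≤ 1 by simp [Fin.le_def])
        rw [Fin.le_def, h1] at this
        omega
    rw [Finset.sum_congr rfl (fun b _ => hfib b)]
    rw [Fin.sum_univ_eq_sum_range (fun k => if a ≤ k then
        a * ((n + (r+1)) ^ (k - a) * (k * FF n r k)) else 0)]
    rw [← Finset.sum_filter]
    have hicc : (Finset.range (n+1)).filter (fun k => a ≤ k) = Finset.Icc a n := by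
      ext k
      simp only [Finset.mem_filter, Finset.mem_range, Finset.mem_Icc]
      omega
    rw [hicc, show FF n (r+1) a = ∑ k ∈ Finset.Icc a n, (n + (r+1)) ^ (k - a) * (k * FF n r k) from rfl,
      Finset.mul_sum]

open Classical in
theorem kloeve_multiple_sum (m n : ℕ) (hm : 0 < m) (hn : 0 < n) :
    ∑ K ∈ Finset.univ.filter (fun K : Fin (m + 2) → Fin (n + 1) =>
        (K 0 : ℕ) = 1 ∧ (K (Fin.last (m + 1)) : ℕ) = n ∧ Monotone K),
      ∏ i : Fin (m + 1),
        (K i.castSucc : ℕ) * (n + m - (i : ℕ)) ^ ((K i.succ : ℕ) - (K i.castSucc : ℕ))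
      = Nat.choose (n + m - 1) m * n ^ (n + m - 1) := by
  have e : n - 1 + m = n + m - 1 := by omega
  have h2 : (1:ℕ) * FF n m 1 = Nat.choose (n+m-1) m * n^(n+m-1) := by
    rw [one_mul, FF_eq n hn m 1 le_rfl hn, e]
  exact (aux n hn m 1 le_rfl hn).trans h2
end

section
/- For positive integers n and any integer k with 1 ≤ k ≤ n, the sum ∑_{j=k}^{n} j·(n+1)^{j-k}·n^{n-j} equals (n-k+1)·n^{n-k+1}. -/
lemma kloeve_aux (n : ℕ) : ∀ d k : ℕ, k + d = n →
    ∑ j ∈ Finset.Icc k n, j * (n + 1) ^ (j - k) * n ^ (n - j)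
      = (d + 1) * n ^ (d + 1) := by
  intro d
  induction d with
  | zero =>
    intro k hk
    simp at hk
    subst hk
    simp [pow_one]
  | succ d ih =>
    intro k hk
    have hklt : k < n + 1 := by omega
    have hIcc : Finset.Icc k n = Finset.Ico k (n + 1) := by
      rw [Finset.Ico_add_one_right_eq_Icc]
    rw [hIcc, Finset.sum_eq_sum_Ico_succ_bot hklt]
    have hIcc2 : Finset.Ico (k + 1) (n + 1) = Finset.Icc (k + 1) n := by
      rw [Finset.Ico_add_one_right_eq_Icc]
    rw [hIcc2]
    have hstep : ∑ j ∈ Finset.Icc (k + 1) n, j * (n + 1) ^ (j - k) * n ^ (n - j)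
        = (n + 1) * ∑ j ∈ Finset.Icc (k + 1) n, j * (n + 1) ^ (j - (k + 1)) * n ^ (n - j) := by
      rw [Finset.mul_sum]
      apply Finset.sum_congr rfl
      intro j hj
      simp only [Finset.mem_Icc] at hj
      have : j - k = (j - (k + 1)) + 1 := by omega
      rw [this, pow_succ]
      ring
    rw [hstep, ih (k + 1) (by omega)]
    have hn : n = k + d + 1 := by omega
    have hnk : n - k = d + 1 := by omega
    subst hn
    simp only [Nat.sub_self, pow_zero, hnk]
    ring

theorem kloeve_single_sum (n k : ℕ) (hn : 0 < n) (hk1 : 1 ≤ k) (hkn : k ≤ n) :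
    ∑ j ∈ Finset.Icc k n, j * (n + 1) ^ (j - k) * n ^ (n - j)
      = (n - k + 1) * n ^ (n - k + 1) := by
  exact kloeve_aux n (n - k) k (by omega)
end

section
/- For any positive integer n, ∑_{1 ≤ k₁ ≤ k₂ ≤ k₃ ≤ n} k₁·k₂·k₃·(n+3)^{k₁-1}·(n+2)^{k₂-k₁}·(n+1)^{k₃-k₂}·n^{n-k₃} = C(n+2, 3)·n^{n+2}. -/
lemma kloeve_aux_key (d m : ℕ) (hd : 0 < d) :
    d * Nat.choose (m + d) d = (m + 1) * Nat.choose (m + d) (d - 1) := by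
  have h1 := Nat.add_one_mul_choose_eq (m + d) (d - 1)
  have hd1 : d - 1 + 1 = d := by omega
  rw [hd1] at h1
  have h2 : Nat.choose (m + d + 1) d = Nat.choose (m + d) (d - 1) + Nat.choose (m + d) d := by
    have h := Nat.choose_succ_succ (m + d) (d - 1)
    simp only [Nat.succ_eq_add_one] at h
    rwa [hd1] at h
  zify at h1 h2 ⊢
  linear_combination (-1 : ℤ) * h1 - (d : ℤ) * h2

lemma kloeve_L (d n : ℕ) (hd : 0 < d) :
    ∀ m, m ≤ n → ∑ t ∈ Finset.range (m + 1),
      (n - t) * (n + d) ^ (m - t) * Nat.choose (t + d - 1) (d - 1) * n ^ (t + d - 1)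
      = Nat.choose (m + d) d * n ^ (m + d) := by
  intro m
  induction m with
  | zero =>
    intro _
    rw [Finset.sum_range_one]
    simp only [Nat.sub_zero, pow_zero, mul_one, Nat.zero_add, Nat.choose_self, one_mul,
      Nat.choose_self]
    have hd1 : d = (d - 1) + 1 := by omega
    conv_rhs => rw [hd1]
    rw [pow_succ]
    ring
  | succ m ih =>
    intro hm
    rw [Finset.sum_range_succ]
    have hstep : ∑ t ∈ Finset.range (m + 1),
        (n - t) * (n + d) ^ (m + 1 - t) * Nat.choose (t + d - 1) (d - 1) * n ^ (t + d - 1)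
        = (n + d) * (Nat.choose (m + d) d * n ^ (m + d)) := by
      rw [← ih (by omega), Finset.mul_sum]
      refine Finset.sum_congr rfl fun t ht => ?_
      rw [Finset.mem_range] at ht
      have h1 : m + 1 - t = (m - t) + 1 := by omega
      rw [h1, pow_succ]
      ring
    rw [hstep]
    have h2 : m + 1 + d - 1 = m + d := by omega
    rw [h2]
    have h3 : m + 1 - (m + 1) = 0 := by omega
    rw [h3, pow_zero, mul_one]
    obtain ⟨s, hs⟩ : ∃ s, n = m + 1 + s := ⟨n - (m + 1), by omega⟩
    have h4 : n - (m + 1) = s := by omega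
    rw [h4]
    have hpascal : Nat.choose (m + 1 + d) d
        = Nat.choose (m + d) (d - 1) + Nat.choose (m + d) d := by
      have h := Nat.choose_succ_succ (m + d) (d - 1)
      simp only [Nat.succ_eq_add_one] at h
      have hd1 : d - 1 + 1 = d := by omega
      rw [hd1] at h
      rw [show m + 1 + d = m + d + 1 by omega, h]
    have hpow : n ^ (m + 1 + d) = n ^ (m + d) * n := by
      rw [show m + 1 + d = (m + d) + 1 by omega, pow_succ]
    rw [hpascal, hpow]
    have hkey2 : d * Nat.choose (m + d) d = (m + 1) * Nat.choose (m + d) (d - 1) :=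
      kloeve_aux_key d m hd
    have hkz : (d : ℤ) * Nat.choose (m + d) d = ((m : ℤ) + 1) * Nat.choose (m + d) (d - 1) := by
      exact_mod_cast hkey2
    zify
    rw [hs]
    push_cast
    linear_combination ((m : ℤ) + 1 + s) ^ (m + d) * hkz

lemma kloeve_cor (d n j : ℕ) (hd : 0 < d) (hj : j ≤ n) :
    ∑ k ∈ Finset.Icc j n,
      k * (n + d) ^ (k - j) * Nat.choose (n - k + d - 1) (d - 1) * n ^ (n - k + d - 1)
      = Nat.choose (n - j + d) d * n ^ (n - j + d) := by
  have hm : n + 1 - j = (n - j) + 1 := by omega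
  rw [← Finset.Ico_add_one_right_eq_Icc, Finset.sum_Ico_eq_sum_range, hm, ← Finset.sum_range_reflect]
  rw [← kloeve_L d n hd (n - j) (by omega)]
  refine Finset.sum_congr rfl fun t ht => ?_
  rw [Finset.mem_range] at ht
  have h1 : j + (n - j + 1 - 1 - t) = n - t := by omega
  rw [h1]
  have h2 : n - t - j = n - j - t := by omega
  have h3 : n - (n - t) + d - 1 = t + d - 1 := by omega
  rw [h2, h3]

theorem kloeve_triple_sum (n : ℕ) (hn : 0 < n) :
    ∑ k1 ∈ Finset.Icc 1 n, ∑ k2 ∈ Finset.Icc k1 n, ∑ k3 ∈ Finset.Icc k2 n,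
        k1 * k2 * k3 * (n + 3) ^ (k1 - 1) * (n + 2) ^ (k2 - k1) *
          (n + 1) ^ (k3 - k2) * n ^ (n - k3)
      = Nat.choose (n + 2) 3 * n ^ (n + 2) := by
  have H3 : ∀ k2, k2 ≤ n → ∑ k3 ∈ Finset.Icc k2 n,
      k3 * (n + 1) ^ (k3 - k2) * n ^ (n - k3) = (n - k2 + 1) * n ^ (n - k2 + 1) := by
    intro k2 h
    have := kloeve_cor 1 n k2 one_pos h
    simpa using this
  have H2 : ∀ k1, k1 ≤ n → ∑ k2 ∈ Finset.Icc k1 n,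
      k2 * (n + 2) ^ (k2 - k1) * ((n - k2 + 1) * n ^ (n - k2 + 1))
      = Nat.choose (n - k1 + 2) 2 * n ^ (n - k1 + 2) := by
    intro k1 h
    have := kloeve_cor 2 n k1 (by norm_num) h
    rw [← this]
    refine Finset.sum_congr rfl fun k hk => ?_
    rw [Finset.mem_Icc] at hk
    have e1 : n - k + 2 - 1 = n - k + 1 := by omega
    rw [e1, Nat.choose_one_right]
    ring
  calc ∑ k1 ∈ Finset.Icc 1 n, ∑ k2 ∈ Finset.Icc k1 n, ∑ k3 ∈ Finset.Icc k2 n,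
        k1 * k2 * k3 * (n + 3) ^ (k1 - 1) * (n + 2) ^ (k2 - k1) *
          (n + 1) ^ (k3 - k2) * n ^ (n - k3)
      = ∑ k1 ∈ Finset.Icc 1 n, ∑ k2 ∈ Finset.Icc k1 n,
          (k1 * (n + 3) ^ (k1 - 1)) *
            (k2 * (n + 2) ^ (k2 - k1) * ((n - k2 + 1) * n ^ (n - k2 + 1))) := by
        refine Finset.sum_congr rfl fun k1 hk1 => Finset.sum_congr rfl fun k2 hk2 => ?_
        rw [Finset.mem_Icc] at hk2
        rw [← H3 k2 hk2.2, Finset.mul_sum, Finset.mul_sum]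
        refine Finset.sum_congr rfl fun k3 _ => by ring
    _ = ∑ k1 ∈ Finset.Icc 1 n,
          (k1 * (n + 3) ^ (k1 - 1)) * (Nat.choose (n - k1 + 2) 2 * n ^ (n - k1 + 2)) := by
        refine Finset.sum_congr rfl fun k1 hk1 => ?_
        rw [Finset.mem_Icc] at hk1
        rw [← Finset.mul_sum, H2 k1 hk1.2]
    _ = Nat.choose (n + 2) 3 * n ^ (n + 2) := by
        have := kloeve_cor 3 n 1 (by norm_num) hn
        rw [show n - 1 + 3 = n + 2 by omega] at this
        rw [← this]
        refine Finset.sum_congr rfl fun k hk => ?_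
        have e1 : n - k + 3 - 1 = n - k + 2 := by omega
        rw [e1]
        norm_num
        ring
end

section
/- Let d be a positive integer and x a real number. Let A_{d,x} be the d×2d matrix with entries a_{i,j} = x if 1 ≤ j ≤ d+1-i, a_{i,j} = 1 if d+2-i ≤ j ≤ d+i, and a_{i,j} = 0 if d+1+i ≤ j ≤ 2d. Define Ω_d(x) = ∑_{ρ} a_{1,ρ₁}a_{2,ρ₂}⋯a_{d,ρ_d}, where the sum is over all injective sequences (ρ₁,…,ρ_d) with 1 ≤ ρ_i ≤ d+i for each i. Then Ω_d(x) = ∑_{m=0}^{d} C(d,m)·(m+1)^d·(x-1)^{d-m}. -/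
open Finset

noncomputable def pfac (M : ℝ) (T : Finset ℕ) (j : ℕ) : ℝ :=
  if j ∈ T then M - ((j : ℝ) - ((T ∩ Finset.range j).card : ℝ))
  else M + ((T ∩ Finset.range j).card : ℝ)

noncomputable def Pfun (d : ℕ) (M : ℝ) (T : Finset ℕ) : ℝ := ∏ j ∈ Finset.range d, pfac M T j

lemma Pfun_succ_notmem (d : ℕ) (M : ℝ) (T : Finset ℕ) (hT : T ⊆ range d) :
    Pfun (d+1) M T = Pfun d M T * (M + T.card) := by
  rw [Pfun, Pfun, Finset.prod_range_succ]
  congr 1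
  have hdT : d ∉ T := fun h => absurd (hT h) (by simp)
  rw [pfac, if_neg hdT]
  congr 2
  rw [Finset.inter_eq_left.2 hT]

lemma Pfun_succ_mem (d : ℕ) (M : ℝ) (T : Finset ℕ) (hT : T ⊆ range d) :
    Pfun (d+1) M (insert d T) = Pfun d M T * (M - ((d : ℝ) - T.card)) := by
  have hdT : d ∉ T := fun h => absurd (hT h) (by simp)
  rw [Pfun, Pfun, Finset.prod_range_succ]
  congr 1
  · apply Finset.prod_congr rfl
    intro j hj
    simp only [mem_range] at hj
    rw [pfac, pfac]
    have h1 : (j ∈ insert d T) ↔ j ∈ T := by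
      simp [Finset.mem_insert]; omega
    have h2 : insert d T ∩ range j = T ∩ range j := by
      ext a; simp [Finset.mem_insert, Finset.mem_range]; omega
    rw [h2]
    by_cases hjT : j ∈ T
    · rw [if_pos (h1.2 hjT), if_pos hjT]
    · rw [if_neg (fun h => hjT (h1.1 h)), if_neg hjT]
  · rw [pfac, if_pos (Finset.mem_insert_self d T)]
    have h2 : insert d T ∩ range d = T := by
      ext a
      simp only [Finset.mem_inter, Finset.mem_insert, Finset.mem_range]
      constructor
      · rintro ⟨h | h, h2⟩; omega; exact h
      · intro h; exact ⟨Or.inr h, by simpa using mem_range.1 (hT h)⟩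
    rw [h2]

theorem Dmain : ∀ (d k : ℕ) (M : ℝ),
    ∑ T ∈ (range d).powersetCard k, Pfun d M T = (d.choose k : ℝ) * M ^ d := by
  intro d
  induction d with
  | zero =>
    intro k M
    match k with
    | 0 => simp [Pfun]
    | k+1 =>
      rw [Finset.powersetCard_eq_empty.2 (by simp)]
      simp
  | succ d ih =>
    intro k M
    match k with
    | 0 =>
      rw [Finset.powersetCard_zero]
      simp only [Finset.sum_singleton, Nat.choose_zero_right, Nat.cast_one, one_mul]
      rw [Pfun]
      rw [Finset.prod_congr rfl (fun j _ => by rw [pfac]; simp : ∀ j ∈ range (d+1), pfac M ∅ j = M)]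
      simp
    | k+1 =>
      have hins : range (d+1) = insert d (range d) := Finset.range_add_one
      have hd : d ∉ range d := by simp
      rw [hins, Finset.powersetCard_succ_insert hd]
      have hdisj : Disjoint ((range d).powersetCard (k+1))
          (((range d).powersetCard k).image (insert d)) := by
        rw [Finset.disjoint_left]
        intro T hT hT2
        simp only [Finset.mem_image] at hT2
        obtain ⟨T', hT', rfl⟩ := hT2
        have := (Finset.mem_powersetCard.1 hT).1
        exact absurd (this (Finset.mem_insert_self d T')) (by simp)
      rw [Finset.sum_union hdisj]
      have hsum1 : ∑ T ∈ (range d).powersetCard (k+1), Pfun (d+1) M T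
          = (M + ((k:ℝ)+1)) * ((d.choose (k+1) : ℝ) * M ^ d) := by
        rw [← ih (k+1) M, Finset.mul_sum]
        apply Finset.sum_congr rfl
        intro T hT
        obtain ⟨hsub, hcard⟩ := Finset.mem_powersetCard.1 hT
        rw [Pfun_succ_notmem d M T hsub, hcard]
        push_cast; ring
      have hsum2 : ∑ T ∈ ((range d).powersetCard k).image (insert d), Pfun (d+1) M T
          = (M - ((d:ℝ) - k)) * ((d.choose k : ℝ) * M ^ d) := by
        rw [Finset.sum_image (by
          intro T hT T' hT' heq
          have h1 : d ∉ T := fun h => absurd ((Finset.mem_powersetCard.1 hT).1 h) (by simp)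
          have h2 : d ∉ T' := fun h => absurd ((Finset.mem_powersetCard.1 hT').1 h) (by simp)
          rw [← Finset.erase_insert h1, ← Finset.erase_insert h2, heq])]
        rw [← ih k M, Finset.mul_sum]
        apply Finset.sum_congr rfl
        intro T hT
        obtain ⟨hsub, hcard⟩ := Finset.mem_powersetCard.1 hT
        rw [Pfun_succ_mem d M T hsub, hcard]
        ring
      rw [hsum1, hsum2]
      have key : ((k:ℝ)+1) * (d.choose (k+1) : ℝ) = ((d:ℝ) - k) * (d.choose k : ℝ) := by
        rcases le_or_gt k d with h | h
        · have := Nat.choose_succ_right_eq d k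
          have hc : ((d.choose (k+1) * (k+1) : ℕ) : ℝ) = ((d.choose k * (d - k) : ℕ) : ℝ) := by
            rw [this]
          push_cast [Nat.cast_sub h] at hc
          linarith
        · rw [Nat.choose_eq_zero_of_lt h, Nat.choose_eq_zero_of_lt (by omega)]
          simp
      have pascal : ((d+1).choose (k+1) : ℝ) = (d.choose k : ℝ) + (d.choose (k+1) : ℝ) := by
        rw [Nat.choose_succ_succ]; push_cast; ring
      rw [pascal, pow_succ]
      linear_combination (M^d) * key

def injSet (n : ℕ) (b : Fin n → ℕ) : Finset (Fin n → ℕ) :=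
  (Fintype.piFinset fun i => Finset.range (b i)).filter Function.Injective

def Ninj (n : ℕ) (b : Fin n → ℕ) : ℕ := (injSet n b).card

lemma Ninj_comp_equiv (n : ℕ) (b : Fin n → ℕ) (e : Equiv.Perm (Fin n)) :
    Ninj n (b ∘ e) = Ninj n b := by
  apply Finset.card_nbij' (i := fun ρ => ρ ∘ e.symm) (j := fun ρ => ρ ∘ e)
  · intro ρ hρ
    simp only [Finset.mem_coe, injSet, Finset.mem_filter, Fintype.mem_piFinset, Function.comp_apply] at hρ ⊢
    exact ⟨fun i => by simpa using hρ.1 (e.symm i),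
      hρ.2.comp e.symm.injective⟩
  · intro ρ hρ
    simp only [Finset.mem_coe, injSet, Finset.mem_filter, Fintype.mem_piFinset, Function.comp_apply] at hρ ⊢
    exact ⟨fun i => hρ.1 (e i), hρ.2.comp e.injective⟩
  · intro ρ hρ; funext k; simp
  · intro ρ hρ; funext k; simp

lemma Ninj_monotone : ∀ (n : ℕ) (b : Fin n → ℕ), Monotone b → (∀ j : Fin n, (j:ℕ) < b j) →
    Ninj n b = ∏ j, (b j - (j:ℕ)) := by
  intro n
  induction n with
  | zero =>
    intro b _ _
    rw [Ninj, injSet]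
    rw [Finset.filter_true_of_mem (fun ρ _ => Function.injective_of_subsingleton ρ)]
    simp
  | succ n ihn =>
    intro b hmono hlt
    have hb0le : ∀ i : Fin (n+1), b 0 ≤ b i := fun i => hmono (Fin.zero_le i)
    have step1 : Ninj (n+1) b
        = ∑ v ∈ range (b 0), ((injSet (n+1) b).filter (fun ρ => ρ 0 = v)).card := by
      apply Finset.card_eq_sum_card_fiberwise
      intro ρ hρ
      simp only [Finset.mem_coe, injSet, Finset.mem_filter, Fintype.mem_piFinset] at hρ
      exact hρ.1 0
    have step2 : ∀ v ∈ range (b 0),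
        ((injSet (n+1) b).filter (fun ρ => ρ 0 = v)).card
          = Ninj n (fun i => b i.succ - 1) := by
      intro v hv
      clear step1
      rw [Finset.mem_range] at hv
      apply Finset.card_nbij'
        (i := fun ρ => fun i : Fin n => if ρ i.succ < v then ρ i.succ else ρ i.succ - 1)
        (j := fun ρ' => Fin.cons v (fun i => if ρ' i < v then ρ' i else ρ' i + 1))
      · intro ρ hρ
        simp only [Finset.mem_coe, injSet, Finset.mem_filter, Fintype.mem_piFinset, Finset.mem_range] at hρ ⊢
        obtain ⟨⟨hpi, hinj⟩, hρ0⟩ := hρ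
        have hne : ∀ i : Fin n, ρ i.succ ≠ v := by
          intro i h
          exact Fin.succ_ne_zero i (hinj (h.trans hρ0.symm))
        constructor
        · intro i
          have h1 := hpi i.succ
          have h2 := hb0le i.succ
          have h3 := hne i
          split_ifs <;> omega
        · intro a a' h
          have h1 := hne a
          have h2 := hne a'
          simp only at h
          have hxy : ρ a.succ = ρ a'.succ := by
            split_ifs at h <;> omega
          exact Fin.succ_injective n (hinj hxy)
      · intro ρ' hρ'
        simp only [Finset.mem_coe, injSet, Finset.mem_filter, Fintype.mem_piFinset, Finset.mem_range] at hρ' ⊢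
        obtain ⟨hpi, hinj⟩ := hρ'
        refine ⟨⟨?_, ?_⟩, Fin.cons_zero _ _⟩
        · intro i
          induction i using Fin.cases with
          | zero => simpa using hv
          | succ i =>
            rw [Fin.cons_succ]
            have h1 := hpi i
            have h2 := hb0le i.succ
            split_ifs <;> omega
        · intro a a' h
          induction a using Fin.cases with
          | zero =>
            induction a' using Fin.cases with
            | zero => rfl
            | succ i' =>
              rw [Fin.cons_zero, Fin.cons_succ] at h
              have h1 := hpi i'
              exfalso
              split_ifs at h <;> omega
          | succ i =>
            induction a' using Fin.cases with
            | zero =>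
              rw [Fin.cons_zero, Fin.cons_succ] at h
              have h1 := hpi i
              exfalso
              split_ifs at h <;> omega
            | succ i' =>
              rw [Fin.cons_succ, Fin.cons_succ] at h
              have hxy : ρ' i = ρ' i' := by split_ifs at h <;> omega
              rw [hinj hxy]
      · intro ρ hρ
        simp only [Finset.mem_coe, injSet, Finset.mem_filter, Fintype.mem_piFinset, Finset.mem_range] at hρ
        obtain ⟨⟨hpi, hinj⟩, hρ0⟩ := hρ
        have hne : ∀ i : Fin n, ρ i.succ ≠ v := by
          intro i h
          exact Fin.succ_ne_zero i (hinj (h.trans hρ0.symm))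
        funext k
        induction k using Fin.cases with
        | zero => simp [hρ0]
        | succ i =>
          simp only [Fin.cons_succ]
          have h1 := hne i
          split_ifs <;> omega
      · intro ρ' hρ'
        funext k
        simp only [Fin.cons_succ]
        split_ifs <;> omega
    rw [step1, Finset.sum_congr rfl step2, Finset.sum_const, Finset.card_range, smul_eq_mul]
    clear step1 step2
    have hmono' : Monotone (fun i : Fin n => b i.succ - 1) := by
      intro i j hij
      have h1 : b i.succ ≤ b j.succ := hmono (by
        rw [Fin.succ_le_succ_iff]; exact hij)
      simp only
      omega
    have hlt' : ∀ j : Fin n, (j:ℕ) < b j.succ - 1 := by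
      intro j
      have := hlt j.succ
      rw [Fin.val_succ] at this
      omega
    rw [ihn _ hmono' hlt', Fin.prod_univ_succ]
    have hprod : ∏ j : Fin n, (b j.succ - 1 - (j:ℕ)) = ∏ j : Fin n, (b j.succ - ((j:ℕ)+1)) := by
      apply Finset.prod_congr rfl
      intro j _
      have := hlt j.succ
      rw [Fin.val_succ] at this
      omega
    rw [hprod]
    simp [Fin.val_succ]

lemma Ninj_rank (n : ℕ) (b : Fin n → ℕ) (hbinj : Function.Injective b)
    (hr : ∀ i, ((Finset.univ.filter fun j => b j < b i)).card < b i) :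
    Ninj n b = ∏ i, (b i - ((Finset.univ.filter fun j => b j < b i)).card) := by
  set σ := Tuple.sort b with hσ
  have hmono : Monotone (b ∘ σ) := Tuple.monotone_sort b
  have hsm : StrictMono (b ∘ σ) := hmono.strictMono_of_injective (hbinj.comp σ.injective)
  have hrank : ∀ j : Fin n, ((Finset.univ.filter fun j' => b j' < b (σ j))).card = (j:ℕ) := by
    intro j
    have hset : (Finset.univ.filter fun j' => b j' < b (σ j))
        = (Finset.univ.filter fun j' : Fin n => σ.symm j' < j) := by
      ext j'
      simp only [Finset.mem_filter, Finset.mem_univ, true_and]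
      have : b j' = (b ∘ σ) (σ.symm j') := by simp
      rw [this]
      exact hsm.lt_iff_lt
    rw [hset]
    have hcard : (Finset.univ.filter fun j' : Fin n => σ.symm j' < j).card
        = (Finset.univ.filter fun j' : Fin n => j' < j).card := by
      apply Finset.card_nbij' (i := fun a => σ.symm a) (j := fun a => σ a)
      · intro a ha; simp only [Finset.mem_coe, Finset.mem_filter, Finset.mem_univ, true_and] at ha ⊢; exact ha
      · intro a ha; simp only [Finset.mem_coe, Finset.mem_filter, Finset.mem_univ, true_and] at ha ⊢
        simpa using ha
      · intro a _; simp
      · intro a _; simp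
    rw [hcard]
    have : (Finset.univ.filter fun j' : Fin n => j' < j) = Finset.Iio j := by
      ext a; simp
    rw [this, Fin.card_Iio]
  have hlt : ∀ j : Fin n, (j:ℕ) < (b ∘ σ) j := by
    intro j
    rw [← hrank j]
    exact hr (σ j)
  calc Ninj n b = Ninj n (b ∘ σ) := (Ninj_comp_equiv n b σ).symm
    _ = ∏ j, ((b ∘ σ) j - (j:ℕ)) := Ninj_monotone n (b ∘ σ) hmono hlt
    _ = ∏ j, (b (σ j) - ((Finset.univ.filter fun j' => b j' < b (σ j))).card) := by
        apply Finset.prod_congr rfl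
        intro j _
        rw [hrank j]
        rfl
    _ = ∏ i, (b i - ((Finset.univ.filter fun j => b j < b i)).card) :=
        Equiv.prod_comp σ (fun i => b i - ((Finset.univ.filter fun j => b j < b i)).card)
def bT (d : ℕ) (T : Finset (Fin d)) (i : Fin d) : ℕ :=
  if i ∈ T then d - (i : ℕ) else d + 1 + (i : ℕ)

lemma bT_inj (d : ℕ) (T : Finset (Fin d)) : Function.Injective (bT d T) := by
  intro i j h
  have hi := i.isLt; have hj := j.isLt
  rw [bT, bT] at h
  apply Fin.ext
  split_ifs at h <;> omega

lemma card_lt_le (d : ℕ) (T : Finset (Fin d)) (i : Fin d) :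
    (T.filter fun j : Fin d => (j:ℕ) < (i:ℕ)).card ≤ (i:ℕ) := by
  have := Finset.card_le_card_of_injOn (f := Fin.val) (t := Finset.range (i:ℕ))
    (s := T.filter fun j : Fin d => (j:ℕ) < (i:ℕ))
    (fun a ha => by
      simp only [Finset.mem_coe, Finset.mem_filter] at ha
      exact Finset.mem_range.2 ha.2)
    (Fin.val_injective.injOn)
  rw [Finset.card_range] at this
  exact this

lemma card_gt_le (d : ℕ) (T : Finset (Fin d)) (i : Fin d) :
    (T.filter fun j : Fin d => (i:ℕ) < (j:ℕ)).card + (i:ℕ) + 1 ≤ d := by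
  have h1 := Finset.card_le_card_of_injOn (f := Fin.val) (t := Finset.Ico ((i:ℕ)+1) d)
    (s := T.filter fun j : Fin d => (i:ℕ) < (j:ℕ))
    (fun a ha => by
      simp only [Finset.mem_coe, Finset.mem_filter] at ha
      simp only [Finset.mem_coe, Finset.mem_Ico]
      exact ⟨by omega, a.isLt⟩)
    (Fin.val_injective.injOn)
  rw [Nat.card_Ico] at h1
  have := i.isLt
  omega

lemma card_split (d : ℕ) (T : Finset (Fin d)) (i : Fin d) :
    T.card = (T.filter fun j : Fin d => (j:ℕ) < (i:ℕ)).card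
      + (T.filter fun j : Fin d => (i:ℕ) < (j:ℕ)).card + (if i ∈ T then 1 else 0) := by
  have h1 := Finset.card_filter_add_card_filter_not
    (s := T) (p := fun j : Fin d => (j:ℕ) < (i:ℕ))
  have h2 := Finset.card_filter_add_card_filter_not
    (s := T.filter fun j : Fin d => ¬ (j:ℕ) < (i:ℕ)) (p := fun j : Fin d => (i:ℕ) < (j:ℕ))
  rw [Finset.filter_filter, Finset.filter_filter] at h2
  have e1 : T.filter (fun j : Fin d => ¬(j:ℕ) < (i:ℕ) ∧ (i:ℕ) < (j:ℕ))
      = T.filter fun j : Fin d => (i:ℕ) < (j:ℕ) := by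
    apply Finset.filter_congr
    intro j _
    constructor
    · exact fun h => h.2
    · exact fun h => ⟨by omega, h⟩
  have e2 : T.filter (fun j : Fin d => ¬(j:ℕ) < (i:ℕ) ∧ ¬(i:ℕ) < (j:ℕ)) = T.filter (fun j : Fin d => j = i) := by
    apply Finset.filter_congr
    intro j _
    simp only [Fin.ext_iff]
    constructor
    · intro h; omega
    · intro h; omega
  rw [e1, e2, Finset.filter_eq'] at h2
  by_cases hiT : i ∈ T
  · rw [if_pos hiT] at h2
    simp only [Finset.card_singleton] at h2
    rw [if_pos hiT]
    omega
  · rw [if_neg hiT] at h2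
    simp only [Finset.card_empty] at h2
    rw [if_neg hiT]
    omega

lemma card_filter_val_lt (d : ℕ) (i : Fin d) :
    (Finset.univ.filter fun j : Fin d => (j:ℕ) < (i:ℕ)).card = (i:ℕ) := by
  have : (Finset.univ.filter fun j : Fin d => (j:ℕ) < (i:ℕ)) = Finset.Iio i := by
    ext a; simp only [Finset.mem_filter, Finset.mem_univ, true_and, Finset.mem_Iio, Fin.lt_def]
  rw [this, Fin.card_Iio]

lemma rank_mem (d : ℕ) (T : Finset (Fin d)) (i : Fin d) (hi : i ∈ T) :
    Finset.univ.filter (fun j => bT d T j < bT d T i) = T.filter fun j : Fin d => (i:ℕ) < (j:ℕ) := by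
  ext j
  have hj := j.isLt; have hii := i.isLt
  simp only [Finset.mem_filter, Finset.mem_univ, true_and, bT, if_pos hi]
  by_cases hjT : j ∈ T
  · rw [if_pos hjT]
    constructor
    · intro h; exact ⟨hjT, by omega⟩
    · intro h; omega
  · rw [if_neg hjT]
    constructor
    · intro h; omega
    · intro h; exact absurd h.1 hjT

lemma rank_notmem (d : ℕ) (T : Finset (Fin d)) (i : Fin d) (hi : i ∉ T) :
    Finset.univ.filter (fun j => bT d T j < bT d T i)
      = T ∪ (Finset.univ.filter fun j : Fin d => j ∉ T ∧ (j:ℕ) < (i:ℕ)) := by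
  ext j
  have hj := j.isLt; have hii := i.isLt
  simp only [Finset.mem_filter, Finset.mem_univ, true_and, bT, if_neg hi, Finset.mem_union]
  by_cases hjT : j ∈ T
  · rw [if_pos hjT]
    constructor
    · intro h; exact Or.inl hjT
    · intro _; omega
  · rw [if_neg hjT]
    constructor
    · intro h; exact Or.inr ⟨hjT, by omega⟩
    · rintro (h | h)
      · exact absurd h hjT
      · omega

lemma image_inter_range (d : ℕ) (T : Finset (Fin d)) (i : Fin d) :
    ((T.image Fin.val) ∩ Finset.range (i:ℕ)).card
      = (T.filter fun j : Fin d => (j:ℕ) < (i:ℕ)).card := by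
  have hset : (T.image Fin.val) ∩ Finset.range (i:ℕ)
      = (T.filter fun j : Fin d => (j:ℕ) < (i:ℕ)).image Fin.val := by
    ext a
    simp only [Finset.mem_inter, Finset.mem_image, Finset.mem_range, Finset.mem_filter]
    constructor
    · rintro ⟨⟨j, hj, rfl⟩, h2⟩; exact ⟨j, ⟨hj, h2⟩, rfl⟩
    · rintro ⟨j, ⟨hj, h2⟩, rfl⟩; exact ⟨⟨j, hj, rfl⟩, h2⟩
  rw [hset, Finset.card_image_of_injective _ Fin.val_injective]

lemma mem_image_val (d : ℕ) (T : Finset (Fin d)) (i : Fin d) :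
    (i:ℕ) ∈ T.image Fin.val ↔ i ∈ T := by
  simp only [Finset.mem_image]
  constructor
  · rintro ⟨j, hj, hji⟩
    rwa [Fin.val_injective hji] at hj
  · intro h; exact ⟨i, h, rfl⟩

lemma NT_eq_Pfun (d : ℕ) (T : Finset (Fin d)) :
    ((Ninj d (bT d T) : ℕ) : ℝ) = Pfun d ((d:ℝ) - T.card + 1) (T.image Fin.val) := by
  have hkle : T.card ≤ d := by
    have := Finset.card_le_univ T
    simpa using this
  have hr : ∀ i, ((Finset.univ.filter fun j => bT d T j < bT d T i)).card < bT d T i := by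
    intro i
    have hii := i.isLt
    by_cases hiT : i ∈ T
    · rw [rank_mem d T i hiT, bT, if_pos hiT]
      have := card_gt_le d T i
      omega
    · rw [rank_notmem d T i hiT, bT, if_neg hiT]
      have h1 : (T ∪ (Finset.univ.filter fun j : Fin d => j ∉ T ∧ (j:ℕ) < (i:ℕ))).card
          ≤ T.card + (Finset.univ.filter fun j : Fin d => j ∉ T ∧ (j:ℕ) < (i:ℕ)).card :=
        Finset.card_union_le _ _
      have h2 : (Finset.univ.filter fun j : Fin d => j ∉ T ∧ (j:ℕ) < (i:ℕ)).card ≤ (i:ℕ) := by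
        refine le_trans (Finset.card_le_card ?_) (le_of_eq (card_filter_val_lt d i))
        intro j hj
        simp only [Finset.mem_filter, Finset.mem_univ, true_and] at hj ⊢
        exact hj.2
      omega
  rw [Ninj_rank d (bT d T) (bT_inj d T) hr, Nat.cast_prod, Pfun,
    ← Fin.prod_univ_eq_prod_range (fun j => pfac ((d:ℝ) - T.card + 1) (T.image Fin.val) j) d]
  apply Finset.prod_congr rfl
  intro i _
  have hsplit := card_split d T i
  have hcb := card_lt_le d T i
  have hca := card_gt_le d T i
  have hii := i.isLt
  rw [pfac, image_inter_range d T i]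
  by_cases hiT : i ∈ T
  · rw [if_pos ((mem_image_val d T i).2 hiT)]
    rw [rank_mem d T i hiT, bT, if_pos hiT]
    rw [if_pos hiT] at hsplit
    rw [Nat.cast_sub (by omega), Nat.cast_sub (by omega)]
    have hs : (T.card : ℝ) = ((T.filter fun j : Fin d => (j:ℕ) < (i:ℕ)).card : ℝ)
        + ((T.filter fun j : Fin d => (i:ℕ) < (j:ℕ)).card : ℝ) + 1 := by
      rw [hsplit]; push_cast; ring
    linarith
  · rw [if_neg (fun h => hiT ((mem_image_val d T i).1 h))]
    rw [rank_notmem d T i hiT, bT, if_neg hiT]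
    rw [if_neg hiT] at hsplit
    have hdisj : Disjoint T (Finset.univ.filter fun j : Fin d => j ∉ T ∧ (j:ℕ) < (i:ℕ)) := by
      rw [Finset.disjoint_left]
      intro a ha ha2
      simp only [Finset.mem_filter, Finset.mem_univ, true_and] at ha2
      exact ha2.1 ha
    rw [Finset.card_union_of_disjoint hdisj]
    have hu : (T.filter fun j : Fin d => (j:ℕ) < (i:ℕ)).card
        + (Finset.univ.filter fun j : Fin d => j ∉ T ∧ (j:ℕ) < (i:ℕ)).card = (i:ℕ) := by
      have hpart := Finset.card_filter_add_card_filter_not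
        (s := Finset.univ.filter fun j : Fin d => (j:ℕ) < (i:ℕ)) (p := fun j => j ∈ T)
      rw [Finset.filter_filter, Finset.filter_filter] at hpart
      have e3 : (Finset.univ.filter fun j : Fin d => (j:ℕ) < (i:ℕ) ∧ j ∈ T)
          = T.filter fun j : Fin d => (j:ℕ) < (i:ℕ) := by
        ext a
        simp only [Finset.mem_filter, Finset.mem_univ, true_and]
        exact and_comm
      have e4 : (Finset.univ.filter fun j : Fin d => (j:ℕ) < (i:ℕ) ∧ j ∉ T)
          = Finset.univ.filter fun j : Fin d => j ∉ T ∧ (j:ℕ) < (i:ℕ) := by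
        ext a
        simp only [Finset.mem_filter, Finset.mem_univ, true_and]
        exact and_comm
      rw [e3, e4, card_filter_val_lt] at hpart
      exact hpart
    rw [Nat.cast_sub (by omega)]
    have hu' : ((T.filter fun j : Fin d => (j:ℕ) < (i:ℕ)).card : ℝ)
        + ((Finset.univ.filter fun j : Fin d => j ∉ T ∧ (j:ℕ) < (i:ℕ)).card : ℝ) = ((i:ℕ):ℝ) := by
      exact_mod_cast hu
    push_cast
    linarith
lemma count_bridge (d : ℕ) (hd : 0 < d) (T : Finset (Fin d)) :
    (Finset.univ.filter (fun ρ : Fin d → Fin (2*d) =>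
      (Function.Injective ρ ∧ ∀ i : Fin d, (ρ i : ℕ) ≤ d + (i:ℕ))
        ∧ ∀ i ∈ T, (i:ℕ) + (ρ i : ℕ) < d)).card
    = Ninj d (bT d T) := by
  have h2d : 0 < 2*d := by omega
  apply Finset.card_nbij'
    (i := fun ρ => fun i : Fin d => (ρ i : ℕ))
    (j := fun g => fun i : Fin d => (⟨g i % (2*d), Nat.mod_lt _ h2d⟩ : Fin (2*d)))
  · intro ρ hρ
    simp only [Finset.mem_coe, Finset.mem_filter, Finset.mem_univ, true_and] at hρ
    obtain ⟨⟨hinj, hle⟩, hT⟩ := hρ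
    simp only [Finset.mem_coe, injSet, Finset.mem_filter, Fintype.mem_piFinset, Finset.mem_range]
    constructor
    · intro i
      rw [bT]
      by_cases hiT : i ∈ T
      · rw [if_pos hiT]
        have := hT i hiT
        omega
      · rw [if_neg hiT]
        have := hle i
        omega
    · exact Fin.val_injective.comp hinj
  · intro g hg
    simp only [Finset.mem_coe, injSet, Finset.mem_filter, Fintype.mem_piFinset, Finset.mem_range] at hg
    obtain ⟨hb, hinj⟩ := hg
    have hlt2d : ∀ i : Fin d, g i < 2*d := by
      intro i
      have h1 := hb i
      have h2 := i.isLt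
      rw [bT] at h1
      split_ifs at h1 <;> omega
    simp only [Finset.mem_coe, Finset.mem_filter, Finset.mem_univ, true_and]
    refine ⟨⟨?_, ?_⟩, ?_⟩
    · intro a a' h
      apply hinj
      have := congrArg Fin.val h
      simp only [Nat.mod_eq_of_lt (hlt2d a), Nat.mod_eq_of_lt (hlt2d a')] at this
      exact this
    · intro i
      have h1 := hb i
      have h2 := i.isLt
      rw [bT] at h1
      simp only [Nat.mod_eq_of_lt (hlt2d i)]
      split_ifs at h1 <;> omega
    · intro i hiT
      have h1 := hb i
      have h2 := i.isLt
      rw [bT, if_pos hiT] at h1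
      simp only [Nat.mod_eq_of_lt (hlt2d i)]
      omega
  · intro ρ hρ
    funext i
    apply Fin.ext
    simp only [Nat.mod_eq_of_lt (ρ i).isLt]
  · intro g hg
    simp only [Finset.mem_coe, injSet, Finset.mem_filter, Fintype.mem_piFinset, Finset.mem_range] at hg
    obtain ⟨hb, hinj⟩ := hg
    funext i
    have h1 := hb i
    have h2 := i.isLt
    rw [bT] at h1
    have : g i < 2*d := by split_ifs at h1 <;> omega
    simp only [Nat.mod_eq_of_lt this]

open Classical in
/-- The permanent-type sum `Ω_d(x)` of the `d × 2d` matrix `A_{d,x}`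
(rows and columns here are 0-indexed: row `i`, column `j` correspond to
row `i+1`, column `j+1` of the paper, so the entry is `x` if `i+j+1 ≤ d`,
`1` if `d ≤ i+j` and `j ≤ d+i`, and `0` otherwise). The sum is over
injective sequences `ρ` with `ρ i ≤ d + i` (0-indexed form of `1 ≤ ρ_i ≤ d+i`). -/
noncomputable def Omega (d : ℕ) (x : ℝ) : ℝ :=
  ∑ ρ ∈ Finset.univ.filter (fun ρ : Fin d → Fin (2 * d) =>
      Function.Injective ρ ∧ ∀ i : Fin d, (ρ i : ℕ) ≤ d + (i : ℕ)),
    ∏ i : Fin d,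
      (if (i : ℕ) + (ρ i : ℕ) < d then x
       else if (ρ i : ℕ) ≤ d + (i : ℕ) then 1 else 0)

theorem kloeve_conjecture (d : ℕ) (hd : 0 < d) (x : ℝ) :
    Omega d x = ∑ m ∈ Finset.range (d + 1),
      (Nat.choose d m : ℝ) * ((m : ℝ) + 1) ^ d * (x - 1) ^ (d - m) := by
  classical
  have stepA : Omega d x = ∑ T ∈ (Finset.univ : Finset (Fin d)).powerset,
      (x-1)^T.card * ((Ninj d (bT d T) : ℕ) : ℝ) := by
    rw [Omega]
    have h1 : ∀ ρ ∈ (Finset.univ.filter (fun ρ : Fin d → Fin (2*d) =>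
        Function.Injective ρ ∧ ∀ i : Fin d, (ρ i : ℕ) ≤ d + (i:ℕ))),
        (∏ i : Fin d, (if (i:ℕ) + (ρ i:ℕ) < d then x else if (ρ i:ℕ) ≤ d + (i:ℕ) then (1:ℝ) else 0))
        = ∑ T ∈ (Finset.univ : Finset (Fin d)).powerset,
            (x-1)^T.card * ∏ i ∈ T, (if (i:ℕ) + (ρ i:ℕ) < d then (1:ℝ) else 0) := by
      intro ρ hρ
      rw [Finset.mem_filter] at hρ
      have hle := hρ.2.2
      calc ∏ i : Fin d, (if (i:ℕ) + (ρ i:ℕ) < d then x else if (ρ i:ℕ) ≤ d + (i:ℕ) then (1:ℝ) else 0)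
          = ∏ i : Fin d, ((x-1) * (if (i:ℕ) + (ρ i:ℕ) < d then (1:ℝ) else 0) + 1) := by
            apply Finset.prod_congr rfl
            intro i _
            by_cases hc : (i:ℕ) + (ρ i:ℕ) < d
            · rw [if_pos hc, if_pos hc]; ring
            · rw [if_neg hc, if_neg hc, if_pos (hle i)]; ring
        _ = ∑ T ∈ (Finset.univ : Finset (Fin d)).powerset,
              (∏ i ∈ T, ((x-1) * (if (i:ℕ) + (ρ i:ℕ) < d then (1:ℝ) else 0)))
                * ∏ i ∈ Finset.univ \ T, (1:ℝ) := Finset.prod_add _ _ _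
        _ = ∑ T ∈ (Finset.univ : Finset (Fin d)).powerset,
              (x-1)^T.card * ∏ i ∈ T, (if (i:ℕ) + (ρ i:ℕ) < d then (1:ℝ) else 0) := by
            apply Finset.sum_congr rfl
            intro T _
            rw [Finset.prod_const_one, mul_one, Finset.prod_mul_distrib, Finset.prod_const]
    rw [Finset.sum_congr rfl h1, Finset.sum_comm]
    apply Finset.sum_congr rfl
    intro T _
    rw [← Finset.mul_sum]
    congr 1
    have h2 : ∀ ρ : Fin d → Fin (2*d), (∏ i ∈ T, (if (i:ℕ) + (ρ i:ℕ) < d then (1:ℝ) else 0))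
        = if (∀ i ∈ T, (i:ℕ) + (ρ i:ℕ) < d) then (1:ℝ) else 0 := fun ρ => by
      simp [Finset.prod_boole]
    rw [Finset.sum_congr rfl (fun ρ _ => h2 ρ), Finset.sum_boole, Finset.filter_filter]
    rw [← count_bridge d hd T]
  rw [stepA]
  have stepC : ∀ T ∈ (Finset.univ : Finset (Fin d)).powerset,
      (x-1)^T.card * ((Ninj d (bT d T) : ℕ) : ℝ)
        = (x-1)^T.card * Pfun d ((d:ℝ) - T.card + 1) (T.image Fin.val) := by
    intro T _
    rw [NT_eq_Pfun]
  rw [Finset.sum_congr rfl stepC, Finset.sum_powerset]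
  have hcard : (Finset.univ : Finset (Fin d)).card = d := by simp
  rw [hcard]
  conv_rhs => rw [← Finset.sum_range_reflect]
  apply Finset.sum_congr rfl
  intro k hk
  rw [Finset.mem_range] at hk
  have hkd : k ≤ d := by omega
  have hstep : ∑ T ∈ (Finset.univ : Finset (Fin d)).powersetCard k,
      (x-1)^T.card * Pfun d ((d:ℝ) - T.card + 1) (T.image Fin.val)
      = ∑ T' ∈ (Finset.range d).powersetCard k, (x-1)^k * Pfun d ((d:ℝ) - k + 1) T' := by
    apply Finset.sum_nbij' (i := fun T => T.image Fin.val)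
      (j := fun T' => (T'.filter (· < d)).attachFin (fun m hm => (Finset.mem_filter.1 hm).2))
    · intro T hT
      rw [Finset.mem_powersetCard] at hT ⊢
      constructor
      · intro a ha
        rw [Finset.mem_image] at ha
        obtain ⟨j, _, rfl⟩ := ha
        exact Finset.mem_range.2 j.isLt
      · rw [Finset.card_image_of_injective _ Fin.val_injective, hT.2]
    · intro T' hT'
      rw [Finset.mem_powersetCard] at hT' ⊢
      have hfil : T'.filter (· < d) = T' := by
        apply Finset.filter_true_of_mem
        intro a ha
        exact Finset.mem_range.1 (hT'.1 ha)
      constructor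
      · intro a _; exact Finset.mem_univ a
      · rw [Finset.card_attachFin, hfil, hT'.2]
    · intro T hT
      ext i
      simp only [Finset.mem_attachFin, Finset.mem_filter, Finset.mem_image]
      constructor
      · rintro ⟨⟨j, hj, hji⟩, _⟩
        rwa [Fin.val_injective hji] at hj
      · intro h
        exact ⟨⟨i, h, rfl⟩, i.isLt⟩
    · intro T' hT'
      rw [Finset.mem_powersetCard] at hT'
      ext a
      simp only [Finset.mem_image, Finset.mem_attachFin, Finset.mem_filter]
      constructor
      · rintro ⟨j, ⟨hj, _⟩, rfl⟩
        exact hj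
      · intro ha
        have had : a < d := Finset.mem_range.1 (hT'.1 ha)
        exact ⟨⟨a, had⟩, ⟨ha, had⟩, rfl⟩
    · intro T hT
      rw [Finset.mem_powersetCard] at hT
      rw [hT.2]
  rw [hstep, ← Finset.mul_sum, Dmain d k ((d:ℝ) - k + 1)]
  have h1 : d + 1 - 1 - k = d - k := by omega
  have h2 : d - (d - k) = k := by omega
  rw [h1, Nat.choose_symm hkd, h2]
  have h3 : ((d - k : ℕ) : ℝ) + 1 = (d:ℝ) - k + 1 := by
    have : ((d - k : ℕ) : ℝ) = (d:ℝ) - k := by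
      rw [Nat.cast_sub hkd]
    rw [this]
  rw [h3]
  ring
end

section
/- Let d and m be integers with 1 ≤ m ≤ d. Then ∑_{1 ≤ i₁ < i₂ < ⋯ < iₘ ≤ d} i₁(i₂-1)(i₃-2)⋯(iₘ-m+1) · (d+1)^{i₁-1} d^{i₂-i₁-1} (d-1)^{i₃-i₂-1} ⋯ (d-m+1)^{d-iₘ} = C(d,m)·(d-m+1)^d. -/
open Finset

def Pf (d : ℕ) : ℕ → ℕ → ℕ
  | n, 0 => (d+1)^n
  | 0, _+1 => 0
  | n+1, k+1 => (d-k) * Pf d n (k+1) + (n+1-k) * Pf d n k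

lemma Pf_of_lt (d : ℕ) : ∀ n k, n < k → Pf d n k = 0 := by
  intro n
  induction n with
  | zero => intro k hk; match k, hk with | k+1, _ => rfl
  | succ n ih =>
    intro k hk
    match k, hk with
    | k+1, hk =>
      show (d-k) * Pf d n (k+1) + (n+1-k) * Pf d n k = 0
      rw [ih (k+1) (by omega), ih k (by omega), Nat.mul_zero, Nat.mul_zero]

lemma Pf_diag (d : ℕ) : ∀ n, Pf d n n = 1 := by
  intro n
  induction n with
  | zero => rfl
  | succ n ih =>
    show (d-n) * Pf d n (n+1) + (n+1-n) * Pf d n n = 1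
    rw [Pf_of_lt d n (n+1) (by omega), ih]
    simp

def Qc (d n k : ℕ) : ℤ :=
  ∑ j ∈ Finset.range (k+1),
    (-1:ℤ)^(k-j) * (d.choose j) * ((d - n + k - j - 1).choose (k-j)) * ((d+1-j : ℕ) : ℤ)^n

-- partial alternating sum of binomials
lemma W0 (d : ℕ) (hd : 1 ≤ d) (k : ℕ) :
    ∑ j ∈ Finset.range (k+1), (-1:ℤ)^(k-j) * (d.choose j) = ((d-1).choose k : ℤ) := by
  induction k with
  | zero => simp
  | succ k ih =>
    rw [Finset.sum_range_succ]
    have h1 : ∀ j ∈ Finset.range (k+1), (-1:ℤ)^(k+1-j) * (d.choose j)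
        = -((-1:ℤ)^(k-j) * (d.choose j)) := by
      intro j hj
      rw [Finset.mem_range] at hj
      have : k+1-j = (k-j)+1 := by omega
      rw [this, pow_succ]; ring
    rw [Finset.sum_congr rfl h1, Finset.sum_neg_distrib, ih]
    have hp : d.choose (k+1) = (d-1).choose k + (d-1).choose (k+1) := by
      have := Nat.choose_succ_succ' (d-1) k
      have e : d-1+1 = d := by omega
      rwa [e] at this
    rw [hp, Nat.sub_self]
    push_cast
    ring

lemma Wlem (d : ℕ) (hd : 1 ≤ d) : ∀ a, a ≤ d-1 → ∀ k,
    ∑ j ∈ Finset.range (k+1), (-1:ℤ)^(k-j) * (d.choose j) * ((a+k-j).choose (k-j))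
      = ((d-1-a).choose k : ℤ) := by
  intro a
  induction a with
  | zero =>
    intro _ k
    have h1 : ∀ j ∈ Finset.range (k+1), (-1:ℤ)^(k-j) * (d.choose j) * ((0+k-j).choose (k-j))
        = (-1:ℤ)^(k-j) * (d.choose j) := by
      intro j hj
      rw [Finset.mem_range] at hj
      have : 0+k-j = k-j := by omega
      rw [this, Nat.choose_self]
      push_cast; ring
    rw [Finset.sum_congr rfl h1, W0 d hd k]
    norm_num
  | succ a iha =>
    intro ha
    have iha' := iha (by omega)
    intro k
    induction k with
    | zero => simp
    | succ k ihk =>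
      -- W(a+1,k+1) = W(a,k+1) - W(a+1,k)
      have key : ∑ j ∈ Finset.range (k+2), (-1:ℤ)^(k+1-j) * (d.choose j) * ((a+1+(k+1)-j).choose (k+1-j))
          = ∑ j ∈ Finset.range (k+2), (-1:ℤ)^(k+1-j) * (d.choose j) * ((a+(k+1)-j).choose (k+1-j))
            - ∑ j ∈ Finset.range (k+1), (-1:ℤ)^(k-j) * (d.choose j) * ((a+1+k-j).choose (k-j)) := by
        rw [Finset.sum_range_succ, Finset.sum_range_succ (fun j => (-1:ℤ)^(k+1-j) * (d.choose j) * ((a+(k+1)-j).choose (k+1-j)))]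
        have e1 : ∀ j ∈ Finset.range (k+1),
            (-1:ℤ)^(k+1-j) * (d.choose j) * ((a+1+(k+1)-j).choose (k+1-j))
            = (-1:ℤ)^(k+1-j) * (d.choose j) * ((a+(k+1)-j).choose (k+1-j))
              - (-1:ℤ)^(k-j) * (d.choose j) * ((a+1+k-j).choose (k-j)) := by
          intro j hj
          rw [Finset.mem_range] at hj
          -- Pascal : C(a+k+2-j, k+1-j) = C(a+k+1-j, k-j) + C(a+k+1-j, k+1-j)
          have hp := Nat.choose_succ_succ' (a+k+1-j) (k-j)
          have e2 : a+1+(k+1)-j = (a+k+1-j)+1 := by omega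
          have e3 : k+1-j = (k-j)+1 := by omega
          have e4 : a+(k+1)-j = a+k+1-j := by omega
          have e5 : a+1+k-j = a+k+1-j := by omega
          rw [e2, e3, e4, e5, hp]
          have e6 : (-1:ℤ)^(k-j+1) = -(-1:ℤ)^(k-j) := by rw [pow_succ]; ring
          rw [e6]
          push_cast
          ring
        rw [Finset.sum_congr rfl e1, Finset.sum_sub_distrib]
        have e7 : a+1+(k+1)-(k+1) = a+1 := by omega
        have e8 : a+(k+1)-(k+1) = a := by omega
        have e9 : k+1-(k+1) = 0 := by omega
        rw [e7, e8, e9]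
        simp
        ring
      rw [key, iha' (k+1), ihk]
      -- C(d-1-a, k+1) - C(d-1-(a+1), k) = C(d-1-(a+1), k+1)
      have hp : (d-1-a).choose (k+1) = (d-1-(a+1)).choose k + (d-1-(a+1)).choose (k+1) := by
        have := Nat.choose_succ_succ' (d-1-(a+1)) k
        have e : d-1-(a+1)+1 = d-1-a := by omega
        rwa [e] at this
      rw [hp]
      push_cast
      ring

-- per-j binomial identity
lemma perj (a i : ℕ) (c : ℤ) :
    (c+a+i+2) * ((a+i+1).choose (i+1)) = (c+a+1) * ((a+i+2).choose (i+1)) - c * ((a+i+1).choose i) := by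
  have hp : (a+i+2).choose (i+1) = (a+i+1).choose i + (a+i+1).choose (i+1) := by
    have := Nat.choose_succ_succ' (a+i+1) i
    rwa [show a+i+1+1 = a+i+2 by omega] at this
  have habs := Nat.choose_succ_right_eq (a+i+1) i
  rw [show a+i+1-i = a+1 by omega] at habs
  have habs' : ((a+i+1).choose (i+1) : ℤ) * (i+1) = ((a+i+1).choose i : ℤ) * (a+1) := by
    exact_mod_cast congrArg (Nat.cast : ℕ → ℤ) habs
  rw [hp]
  push_cast
  nlinarith [habs']

lemma Qrec (d n k : ℕ) (h : n+2 ≤ d) :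
    Qc d (n+1) (k+1) = ((d:ℤ)-k) * Qc d n (k+1) + ((n:ℤ)+1-k) * Qc d n k := by
  unfold Qc
  rw [Finset.mul_sum, Finset.mul_sum]
  rw [Finset.sum_range_succ, Finset.sum_range_succ
    (fun j => ((d:ℤ)-k) * ((-1:ℤ)^(k+1-j) * (d.choose j) * ((d - n + (k+1) - j - 1).choose (k+1-j)) * ((d+1-j : ℕ) : ℤ)^n))]
  have hlast :
      (-1:ℤ)^(k+1-(k+1)) * (d.choose (k+1)) * ((d - (n+1) + (k+1) - (k+1) - 1).choose (k+1-(k+1))) * ((d+1-(k+1) : ℕ) : ℤ)^(n+1)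
      = ((d:ℤ)-k) * ((-1:ℤ)^(k+1-(k+1)) * (d.choose (k+1)) * ((d - n + (k+1) - (k+1) - 1).choose (k+1-(k+1))) * ((d+1-(k+1) : ℕ) : ℤ)^n) := by
    rw [Nat.sub_self]
    simp only [pow_zero, Nat.choose_zero_right, Nat.cast_one, one_mul, mul_one]
    by_cases hk : k+1 ≤ d
    · have e : ((d+1-(k+1) : ℕ) : ℤ) = (d:ℤ) - k := by omega
      rw [pow_succ, e]; ring
    · rw [Nat.choose_eq_zero_of_lt (by omega), Nat.cast_zero]; ring
  have hmain : ∀ j ∈ Finset.range (k+1),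
      (-1:ℤ)^(k+1-j) * (d.choose j) * ((d - (n+1) + (k+1) - j - 1).choose (k+1-j)) * ((d+1-j : ℕ) : ℤ)^(n+1)
      = ((d:ℤ)-k) * ((-1:ℤ)^(k+1-j) * (d.choose j) * ((d - n + (k+1) - j - 1).choose (k+1-j)) * ((d+1-j : ℕ) : ℤ)^n)
        + ((n:ℤ)+1-k) * ((-1:ℤ)^(k-j) * (d.choose j) * ((d - n + k - j - 1).choose (k-j)) * ((d+1-j : ℕ) : ℤ)^n) := by
    intro j hj
    rw [Finset.mem_range] at hj
    by_cases hjd : j ≤ d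
    · set a := d - n - 2 with ha
      set i := k - j with hi
      have e1 : d - (n+1) + (k+1) - j - 1 = a+i+1 := by omega
      have e2 : d - n + (k+1) - j - 1 = a+i+2 := by omega
      have e3 : d - n + k - j - 1 = a+i+1 := by omega
      have e4 : k+1-j = i+1 := by omega
      have e5 : ((d+1-j : ℕ) : ℤ) = ((n:ℤ)+1-(k:ℤ)) + a + i + 2 := by omega
      have e6 : ((d:ℤ)-k) = ((n:ℤ)+1-(k:ℤ)) + a + 1 := by omega
      rw [e1, e2, e3, e4, e5, e6]
      have key := perj a i ((n:ℤ)+1-(k:ℤ))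
      linear_combination (-(-1:ℤ)^i * ((d.choose j):ℤ) * (((n:ℤ)+1-(k:ℤ))+a+i+2)^n) * key
    · rw [Nat.choose_eq_zero_of_lt (by omega : d < j)]
      push_cast
      ring
  rw [Finset.sum_congr rfl hmain, Finset.sum_add_distrib, hlast]
  ring

lemma PQ (d : ℕ) : ∀ n, n + 1 ≤ d → ∀ k, (Pf d n k : ℤ) = Qc d n k := by
  intro n
  induction n with
  | zero =>
    intro hd k
    have hq : Qc d 0 k = ∑ j ∈ Finset.range (k+1), (-1:ℤ)^(k-j) * (d.choose j) * (((d-1)+k-j).choose (k-j)) := by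
      unfold Qc
      refine Finset.sum_congr rfl ?_
      intro j hj
      rw [Finset.mem_range] at hj
      rw [show d - 0 + k - j - 1 = (d-1)+k-j by omega, pow_zero, mul_one]
    rw [hq, Wlem d (by omega) (d-1) (by omega) k, Nat.sub_self]
    cases k with
    | zero =>
      have hPf : Pf d 0 0 = 1 := rfl
      rw [hPf, Nat.choose_zero_right]
    | succ k =>
      rw [Pf_of_lt d 0 (k+1) (by omega), Nat.choose_eq_zero_of_lt (by omega)]
  | succ n ih =>
    intro hd k
    have ih' := ih (by omega)
    cases k with
    | zero =>
      have hPf : Pf d (n+1) 0 = (d+1)^(n+1) := rfl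
      rw [hPf]
      unfold Qc
      rw [Finset.sum_range_one]
      rw [Nat.choose_zero_right (d - (n+1) + 0 - 0 - 1), Nat.choose_zero_right]
      have e : ((d+1-0 : ℕ) : ℤ) = (d:ℤ)+1 := by omega
      rw [e]
      push_cast
      ring
    | succ k =>
      rw [Qrec d n k (by omega)]
      show (((d-k) * Pf d n (k+1) + (n+1-k) * Pf d n k : ℕ) : ℤ) = _
      by_cases hk : k ≤ n
      · push_cast [Nat.cast_sub (by omega : k ≤ d), Nat.cast_sub (by omega : k ≤ n+1)]
        rw [ih' (k+1), ih' k]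
        try ring
      · have q1 : Qc d n (k+1) = 0 := by
          rw [← ih' (k+1), Pf_of_lt d n (k+1) (by omega), Nat.cast_zero]
        have q2 : Qc d n k = 0 := by
          rw [← ih' k, Pf_of_lt d n k (by omega), Nat.cast_zero]
        rw [Pf_of_lt d n (k+1) (by omega), Pf_of_lt d n k (by omega), q1, q2]
        simp

lemma Pf_top (d m : ℕ) (hm : 1 ≤ m) (hmd : m ≤ d) :
    Pf d d m = d.choose m * (d - m + 1)^d := by
  obtain ⟨d', rfl⟩ : ∃ d', d = d'+1 := ⟨d-1, by omega⟩
  obtain ⟨m', rfl⟩ : ∃ m', m = m'+1 := ⟨m-1, by omega⟩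
  have hstep : Pf (d'+1) (d'+1) (m'+1)
      = (d'+1-m') * (Pf (d'+1) d' (m'+1) + Pf (d'+1) d' m') := by
    show (d'+1-m') * Pf (d'+1) d' (m'+1) + (d'+1-m') * Pf (d'+1) d' m' = _
    ring
  have hQ : ∀ k, Qc (d'+1) d' k = ∑ j ∈ Finset.range (k+1),
      (-1:ℤ)^(k-j) * ((d'+1).choose j) * ((d'+2-j : ℕ) : ℤ)^d' := by
    intro k
    unfold Qc
    refine Finset.sum_congr rfl ?_
    intro j hj
    rw [Finset.mem_range] at hj
    rw [show d'+1 - d' + k - j - 1 = k - j by omega, Nat.choose_self, Nat.cast_one, mul_one,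
      show d'+1+1-j = d'+2-j by omega]
  have hsum : Qc (d'+1) d' (m'+1) + Qc (d'+1) d' m'
      = ((d'+1).choose (m'+1)) * ((d'+1-m' : ℕ) : ℤ)^d' := by
    rw [hQ (m'+1), hQ m', Finset.sum_range_succ, Nat.sub_self]
    have e : ∀ j ∈ Finset.range (m'+1),
        (-1:ℤ)^(m'+1-j) * ((d'+1).choose j) * ((d'+2-j : ℕ) : ℤ)^d'
        = -((-1:ℤ)^(m'-j) * ((d'+1).choose j) * ((d'+2-j : ℕ) : ℤ)^d') := by
      intro j hj
      rw [Finset.mem_range] at hj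
      rw [show m'+1-j = (m'-j)+1 by omega, pow_succ]
      ring
    rw [Finset.sum_congr rfl e, Finset.sum_neg_distrib,
      show d'+2-(m'+1) = d'+1-m' from by omega]
    simp
  have hcast : ((Pf (d'+1) d' (m'+1) + Pf (d'+1) d' m' : ℕ) : ℤ)
      = (((d'+1).choose (m'+1) * (d'+1-m')^d' : ℕ) : ℤ) := by
    push_cast
    rw [PQ (d'+1) d' (by omega) (m'+1), PQ (d'+1) d' (by omega) m', hsum]
    try push_cast
    try ring
  have hcast' : Pf (d'+1) d' (m'+1) + Pf (d'+1) d' m'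
      = (d'+1).choose (m'+1) * (d'+1-m')^d' := by exact_mod_cast hcast
  rw [hstep, hcast', show d'+1-(m'+1)+1 = d'+1-m' from by omega]
  ring

open Classical in
noncomputable def Sf (d n k : ℕ) : ℕ :=
  ∑ I ∈ Finset.univ.filter (fun I : Fin (k + 2) → Fin (n + 2) =>
      (I 0 : ℕ) = 0 ∧ (I (Fin.last (k + 1)) : ℕ) = n + 1 ∧ StrictMono I),
    ((∏ s : Fin k, ((I s.succ.castSucc : ℕ) - (s : ℕ))) *
      ∏ s : Fin (k + 1), (d + 1 - (s : ℕ)) ^ ((I s.succ : ℕ) - (I s.castSucc : ℕ) - 1))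

lemma Sf_k0 (d n : ℕ) : Sf d n 0 = (d+1)^n := by
  unfold Sf
  have hset : (Finset.univ.filter (fun I : Fin 2 → Fin (n + 2) =>
      (I 0 : ℕ) = 0 ∧ (I (Fin.last 1) : ℕ) = n + 1 ∧ StrictMono I))
      = { ![(0 : Fin (n+2)), Fin.last (n+1)] } := by
    ext I
    simp only [Finset.mem_filter, Finset.mem_univ, true_and, Finset.mem_singleton]
    constructor
    · rintro ⟨h0, h1, -⟩
      funext j
      fin_cases j
      · ext; simpa using h0
      · ext
        simp only [Matrix.cons_val_one, Matrix.head_cons, Fin.val_last]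
        have : (Fin.last 1 : Fin 2) = ⟨1, by omega⟩ := rfl
        rw [this] at h1
        simpa using h1
    · rintro rfl
      refine ⟨rfl, rfl, ?_⟩
      intro a b hab
      fin_cases a <;> fin_cases b <;> simp_all [Fin.lt_def]
  rw [hset, Finset.sum_singleton]
  simp [Fin.lt_def]

lemma Sf_n0 (d k : ℕ) : Sf d 0 (k+1) = 0 := by
  unfold Sf
  have hset : (Finset.univ.filter (fun I : Fin (k+3) → Fin 2 =>
      (I 0 : ℕ) = 0 ∧ (I (Fin.last (k+2)) : ℕ) = 0 + 1 ∧ StrictMono I)) = ∅ := by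
    rw [Finset.filter_eq_empty_iff]
    rintro I - ⟨h0, hl, hs⟩
    have h01 : I ⟨0, by omega⟩ < I ⟨1, by omega⟩ := hs (by simp [Fin.lt_def])
    have h12 : I ⟨1, by omega⟩ < I ⟨2, by omega⟩ := hs (by simp [Fin.lt_def])
    have h2l : I ⟨2, by omega⟩ ≤ I (Fin.last (k+2)) := hs.monotone (by simp [Fin.le_def])
    have h0' : (⟨0, by omega⟩ : Fin (k+3)) = 0 := rfl
    rw [h0'] at h01
    rw [Fin.lt_def, h0] at h01
    rw [Fin.lt_def] at h12
    rw [Fin.le_def, hl] at h2l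
    omega
  rw [hset, Finset.sum_empty]


def mapA (n k : ℕ) (I : Fin (k+3) → Fin (n+3)) : Fin (k+3) → Fin (n+2) :=
  fun j => if _ : (j:ℕ) ≤ k+1
    then ⟨min (I j : ℕ) n, lt_of_le_of_lt (min_le_right _ _) (by omega)⟩
    else Fin.last (n+1)

def mapA' (n k : ℕ) (J : Fin (k+3) → Fin (n+2)) : Fin (k+3) → Fin (n+3) :=
  fun j => if _ : (j:ℕ) ≤ k+1 then (J j).castSucc else Fin.last (n+2)

lemma mapA_val_pos (n k : ℕ) (I : Fin (k+3) → Fin (n+3)) (j : Fin (k+3))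
    (h : (j:ℕ) ≤ k+1) : ((mapA n k I) j : ℕ) = min (I j : ℕ) n := by
  unfold mapA
  rw [dif_pos h]

lemma mapA_val_neg (n k : ℕ) (I : Fin (k+3) → Fin (n+3)) (j : Fin (k+3))
    (h : ¬ (j:ℕ) ≤ k+1) : ((mapA n k I) j : ℕ) = n+1 := by
  unfold mapA
  rw [dif_neg h]
  simp [Fin.val_last]

lemma mapA'_val_pos (n k : ℕ) (J : Fin (k+3) → Fin (n+2)) (j : Fin (k+3))
    (h : (j:ℕ) ≤ k+1) : ((mapA' n k J) j : ℕ) = (J j : ℕ) := by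
  unfold mapA'
  rw [dif_pos h]
  simp [Fin.coe_castSucc]

lemma mapA'_val_neg (n k : ℕ) (J : Fin (k+3) → Fin (n+2)) (j : Fin (k+3))
    (h : ¬ (j:ℕ) ≤ k+1) : ((mapA' n k J) j : ℕ) = n+2 := by
  unfold mapA'
  rw [dif_neg h]
  simp [Fin.val_last]

open Classical in
lemma Sf_succ (d n k : ℕ) :
    Sf d (n+1) (k+1) = (d-k) * Sf d n (k+1) + (n+1-k) * Sf d n k := by
  unfold Sf
  rw [← Finset.sum_filter_add_sum_filter_not
    (Finset.univ.filter (fun I : Fin (k + 3) → Fin (n + 3) =>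
      (I 0 : ℕ) = 0 ∧ (I (Fin.last (k + 2)) : ℕ) = n + 1 + 1 ∧ StrictMono I))
    (fun I => (I ((Fin.last (k+1)).castSucc) : ℕ) = n + 1)]
  have hB : ∑ I ∈ (Finset.univ.filter (fun I : Fin (k + 3) → Fin (n + 3) =>
      (I 0 : ℕ) = 0 ∧ (I (Fin.last (k + 2)) : ℕ) = n + 1 + 1 ∧ StrictMono I)).filter
      (fun I => (I ((Fin.last (k+1)).castSucc) : ℕ) = n + 1),
      ((∏ s : Fin (k+1), ((I s.succ.castSucc : ℕ) - (s : ℕ))) *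
        ∏ s : Fin (k + 2), (d + 1 - (s : ℕ)) ^ ((I s.succ : ℕ) - (I s.castSucc : ℕ) - 1))
      = (n+1-k) * Sf d n k := by
    unfold Sf
    rw [Finset.mul_sum]
    refine Finset.sum_nbij'
      (fun I (j : Fin (k+2)) => (⟨min (I j.castSucc : ℕ) (n+1), by omega⟩ : Fin (n+2)))
      (fun J (j : Fin (k+3)) => if h : (j:ℕ) ≤ k+1
        then (J ⟨(j:ℕ), by omega⟩).castSucc
        else Fin.last (n+2))
      ?_ ?_ ?_ ?_ ?_
    · -- membership forward
      intro I hI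
      simp only [Finset.mem_filter, Finset.mem_univ, true_and] at hI ⊢
      obtain ⟨⟨h0, hl, hs⟩, hq⟩ := hI
      have hle : ∀ j : Fin (k+2), (I j.castSucc : ℕ) ≤ n+1 := by
        intro j
        have h1 : I j.castSucc ≤ I ((Fin.last (k+1)).castSucc) :=
          hs.monotone (by rw [Fin.le_def]; simp; omega)
        rw [Fin.le_def, hq] at h1
        exact h1
      refine ⟨?_, ?_, ?_⟩
      · show min (I ((0 : Fin (k+2)).castSucc) : ℕ) (n+1) = 0
        rw [Fin.castSucc_zero, h0]
        omega
      · show min (I ((Fin.last (k+1)).castSucc) : ℕ) (n+1) = n+1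
        rw [hq]
        omega
      · intro a b hab
        rw [Fin.lt_def]
        show min (I a.castSucc : ℕ) (n+1) < min (I b.castSucc : ℕ) (n+1)
        have h2 := hs (show a.castSucc < b.castSucc by rwa [Fin.castSucc_lt_castSucc_iff])
        rw [Fin.lt_def] at h2
        have ha := hle a
        have hb := hle b
        omega
    · -- membership backward
      intro J hJ
      simp only [Finset.mem_filter, Finset.mem_univ, true_and] at hJ ⊢
      obtain ⟨hJ0, hJl, hJs⟩ := hJ
      have hJdx : ∀ (a b : Fin (k+2)), (a:ℕ) = (b:ℕ) → J a = J b :=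
        fun a b h => congrArg J (Fin.ext h)
      refine ⟨⟨?_, ?_, ?_⟩, ?_⟩
      · rw [dif_pos (by simp : ((0 : Fin (k+3)):ℕ) ≤ k+1)]
        simp only [Fin.coe_castSucc]
        rw [hJdx _ 0 (by simp)]
        exact hJ0
      · rw [dif_neg (by simp [Fin.val_last] : ¬ ((Fin.last (k+2) : Fin (k+3)):ℕ) ≤ k+1)]
        simp [Fin.val_last]
      · intro a b hab
        have habv : (a:ℕ) < (b:ℕ) := hab
        by_cases hbk : (b:ℕ) ≤ k+1
        · have hak : (a:ℕ) ≤ k+1 := by omega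
          show (if h : (a:ℕ) ≤ k+1 then (J ⟨(a:ℕ), by omega⟩).castSucc else Fin.last (n+2))
            < (if h : (b:ℕ) ≤ k+1 then (J ⟨(b:ℕ), by omega⟩).castSucc else Fin.last (n+2))
          rw [dif_pos hak, dif_pos hbk, Fin.castSucc_lt_castSucc_iff]
          exact hJs habv
        · by_cases hak : (a:ℕ) ≤ k+1
          · show (if h : (a:ℕ) ≤ k+1 then (J ⟨(a:ℕ), by omega⟩).castSucc else Fin.last (n+2))
              < (if h : (b:ℕ) ≤ k+1 then (J ⟨(b:ℕ), by omega⟩).castSucc else Fin.last (n+2))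
            rw [dif_pos hak, dif_neg hbk]
            exact Fin.castSucc_lt_last _
          · exfalso
            have := a.isLt
            have := b.isLt
            omega
      · rw [dif_pos (by simp [Fin.coe_castSucc, Fin.val_last] : (((Fin.last (k+1)).castSucc : Fin (k+3)):ℕ) ≤ k+1)]
        simp only [Fin.coe_castSucc]
        rw [hJdx _ (Fin.last (k+1)) (by simp [Fin.coe_castSucc, Fin.val_last])]
        exact hJl
    · -- left inverse
      intro I hI
      simp only [Finset.mem_filter, Finset.mem_univ, true_and] at hI
      obtain ⟨⟨h0, hl, hs⟩, hq⟩ := hI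
      have hle : ∀ j : Fin (k+2), (I j.castSucc : ℕ) ≤ n+1 := by
        intro j
        have h1 : I j.castSucc ≤ I ((Fin.last (k+1)).castSucc) :=
          hs.monotone (by rw [Fin.le_def]; simp; omega)
        rw [Fin.le_def, hq] at h1
        exact h1
      have hIdx : ∀ (a b : Fin (k+3)), (a:ℕ) = (b:ℕ) → I a = I b :=
        fun a b h => congrArg I (Fin.ext h)
      funext j
      apply Fin.ext
      simp only []
      by_cases hj : (j:ℕ) ≤ k+1
      · rw [dif_pos hj]
        simp only [Fin.coe_castSucc]
        rw [hIdx (⟨(j:ℕ), by omega⟩ : Fin (k+2)).castSucc j (by simp)]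
        have h2 : (I j : ℕ) ≤ n+1 := by
          rw [hIdx j (⟨(j:ℕ), by omega⟩ : Fin (k+2)).castSucc (by simp)]
          exact hle _
        omega
      · rw [dif_neg hj]
        have hjv : (j:ℕ) = k+2 := by have := j.isLt; omega
        rw [hIdx j (Fin.last (k+2)) (by simp [Fin.val_last, hjv]), hl]
        simp [Fin.val_last]
    · -- right inverse
      intro J hJ
      simp only [Finset.mem_filter, Finset.mem_univ, true_and] at hJ
      obtain ⟨hJ0, hJl, hJs⟩ := hJ
      have hJdx : ∀ (a b : Fin (k+2)), (a:ℕ) = (b:ℕ) → J a = J b :=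
        fun a b h => congrArg J (Fin.ext h)
      funext j
      apply Fin.ext
      simp only []
      rw [dif_pos (show ((j.castSucc : Fin (k+3)):ℕ) ≤ k+1 by
        simp only [Fin.coe_castSucc]; omega)]
      rw [Fin.coe_castSucc]
      rw [hJdx _ j (by simp)]
      have := (J j).isLt
      omega
    · -- term equality
      intro I hI
      simp only [Finset.mem_filter, Finset.mem_univ, true_and] at hI
      obtain ⟨⟨h0, hl, hs⟩, hq⟩ := hI
      have hle : ∀ j : Fin (k+2), (I j.castSucc : ℕ) ≤ n+1 := by
        intro j
        have h1 : I j.castSucc ≤ I ((Fin.last (k+1)).castSucc) :=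
          hs.monotone (by rw [Fin.le_def]; simp; omega)
        rw [Fin.le_def, hq] at h1
        exact h1
      have hIdx : ∀ (a b : Fin (k+3)), (a:ℕ) = (b:ℕ) → I a = I b :=
        fun a b h => congrArg I (Fin.ext h)
      rw [Fin.prod_univ_castSucc
        (fun s : Fin (k+1) => ((I s.succ.castSucc : ℕ) - (s : ℕ)))]
      rw [Fin.prod_univ_castSucc
        (fun s : Fin (k+2) => (d + 1 - (s : ℕ)) ^ ((I s.succ : ℕ) - (I s.castSucc : ℕ) - 1))]
      have hfac1 : ((I (Fin.last k).succ.castSucc : ℕ) - ((Fin.last k) : ℕ)) = n+1-k := by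
        rw [hIdx ((Fin.last k).succ.castSucc) ((Fin.last (k+1)).castSucc)
          (by simp [Fin.val_last, Fin.coe_castSucc, Fin.val_succ]), hq, Fin.val_last]
      have hfac2 : (d + 1 - ((Fin.last (k+1)) : ℕ)) ^ ((I (Fin.last (k+1)).succ : ℕ) - (I (Fin.last (k+1)).castSucc : ℕ) - 1) = 1 := by
        rw [Fin.succ_last, hl, hq]
        simp
      rw [hfac1, hfac2, mul_one]
      simp only []
      have hprod1 : ∏ s : Fin k, (min (I s.succ.castSucc.castSucc : ℕ) (n+1) - (s : ℕ))
          = ∏ s : Fin k, ((I s.castSucc.succ.castSucc : ℕ) - (s.castSucc : ℕ)) := by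
        refine Finset.prod_congr rfl ?_
        intro s _
        rw [hIdx (s.castSucc.succ.castSucc) (s.succ.castSucc.castSucc)
          (by simp [Fin.coe_castSucc, Fin.val_succ])]
        have := hle (s.succ.castSucc)
        simp only [Fin.coe_castSucc]
        omega
      have hprod2 : ∏ s : Fin (k+1), (d + 1 - (s : ℕ)) ^ (min (I s.succ.castSucc : ℕ) (n+1) - min (I s.castSucc.castSucc : ℕ) (n+1) - 1)
          = ∏ s : Fin (k+1), (d + 1 - (s.castSucc : ℕ)) ^ ((I s.castSucc.succ : ℕ) - (I s.castSucc.castSucc : ℕ) - 1) := by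
        refine Finset.prod_congr rfl ?_
        intro s _
        rw [hIdx (s.castSucc.succ) (s.succ.castSucc) (by simp [Fin.coe_castSucc, Fin.val_succ])]
        have h1 := hle s.succ
        have h2 := hle s.castSucc
        simp only [Fin.coe_castSucc]
        congr 1
        omega
      rw [← hprod1, ← hprod2]
      ring
  have hA : ∑ I ∈ (Finset.univ.filter (fun I : Fin (k + 3) → Fin (n + 3) =>
      (I 0 : ℕ) = 0 ∧ (I (Fin.last (k + 2)) : ℕ) = n + 1 + 1 ∧ StrictMono I)).filter
      (fun I => ¬ (I ((Fin.last (k+1)).castSucc) : ℕ) = n + 1),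
      ((∏ s : Fin (k+1), ((I s.succ.castSucc : ℕ) - (s : ℕ))) *
        ∏ s : Fin (k + 2), (d + 1 - (s : ℕ)) ^ ((I s.succ : ℕ) - (I s.castSucc : ℕ) - 1))
      = (d-k) * Sf d n (k+1) := by
    clear hB
    unfold Sf
    rw [Finset.mul_sum]
    refine Finset.sum_nbij' (mapA n k) (mapA' n k) ?_ ?_ ?_ ?_ ?_
    · -- membership forward
      intro I hI
      simp only [Finset.mem_filter, Finset.mem_univ, true_and] at hI ⊢
      obtain ⟨⟨h0, hl, hs⟩, hq⟩ := hI
      have hlt : (I ((Fin.last (k+1)).castSucc) : ℕ) ≤ n := by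
        have h1 : I ((Fin.last (k+1)).castSucc) < I (Fin.last (k+2)) :=
          hs (Fin.castSucc_lt_last _)
        rw [Fin.lt_def, hl] at h1
        omega
      have hle : ∀ j : Fin (k+3), (j:ℕ) ≤ k+1 → (I j : ℕ) ≤ n := by
        intro j hj
        have h1 : I j ≤ I ((Fin.last (k+1)).castSucc) :=
          hs.monotone (by rw [Fin.le_def]; simp [Fin.coe_castSucc, Fin.val_last]; omega)
        rw [Fin.le_def] at h1
        omega
      refine ⟨?_, ?_, ?_⟩
      · rw [mapA_val_pos n k I 0 (by simp), h0]
        omega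
      · rw [mapA_val_neg n k I (Fin.last (k+2)) (by simp [Fin.val_last])]
      · intro a b hab
        have habv : (a:ℕ) < (b:ℕ) := hab
        rw [Fin.lt_def]
        by_cases hbk : (b:ℕ) ≤ k+1
        · have hak : (a:ℕ) ≤ k+1 := by omega
          rw [mapA_val_pos n k I a hak, mapA_val_pos n k I b hbk]
          have h2 := hs hab
          rw [Fin.lt_def] at h2
          have hbb := hle b hbk
          omega
        · rw [mapA_val_neg n k I b hbk]
          by_cases hak : (a:ℕ) ≤ k+1
          · rw [mapA_val_pos n k I a hak]
            have := hle a hak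
            omega
          · exfalso
            have := a.isLt
            have := b.isLt
            omega
    · -- membership backward
      intro J hJ
      simp only [Finset.mem_filter, Finset.mem_univ, true_and] at hJ ⊢
      obtain ⟨hJ0, hJl, hJs⟩ := hJ
      have hJle : ∀ j : Fin (k+3), (j:ℕ) ≤ k+1 → (J j : ℕ) ≤ n := by
        intro j hj
        have h1 : J j < J (Fin.last (k+2)) := hJs (by rw [Fin.lt_def]; simp [Fin.val_last]; omega)
        rw [Fin.lt_def, hJl] at h1
        omega
      refine ⟨⟨?_, ?_, ?_⟩, ?_⟩
      · rw [mapA'_val_pos n k J 0 (by simp), hJ0]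
      · rw [mapA'_val_neg n k J (Fin.last (k+2)) (by simp [Fin.val_last])]
      · intro a b hab
        have habv : (a:ℕ) < (b:ℕ) := hab
        rw [Fin.lt_def]
        by_cases hbk : (b:ℕ) ≤ k+1
        · have hak : (a:ℕ) ≤ k+1 := by omega
          rw [mapA'_val_pos n k J a hak, mapA'_val_pos n k J b hbk]
          exact hJs hab
        · rw [mapA'_val_neg n k J b hbk]
          by_cases hak : (a:ℕ) ≤ k+1
          · rw [mapA'_val_pos n k J a hak]
            have := (J a).isLt
            omega
          · exfalso
            have := a.isLt
            have := b.isLt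
            omega
      · rw [mapA'_val_pos n k J ((Fin.last (k+1)).castSucc) (by simp [Fin.coe_castSucc, Fin.val_last])]
        have := hJle ((Fin.last (k+1)).castSucc) (by simp [Fin.coe_castSucc, Fin.val_last])
        omega
    · -- left inverse
      intro I hI
      simp only [Finset.mem_filter, Finset.mem_univ, true_and] at hI
      obtain ⟨⟨h0, hl, hs⟩, hq⟩ := hI
      have hlt : (I ((Fin.last (k+1)).castSucc) : ℕ) ≤ n := by
        have h1 : I ((Fin.last (k+1)).castSucc) < I (Fin.last (k+2)) :=
          hs (Fin.castSucc_lt_last _)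
        rw [Fin.lt_def, hl] at h1
        omega
      have hle : ∀ j : Fin (k+3), (j:ℕ) ≤ k+1 → (I j : ℕ) ≤ n := by
        intro j hj
        have h1 : I j ≤ I ((Fin.last (k+1)).castSucc) :=
          hs.monotone (by rw [Fin.le_def]; simp [Fin.coe_castSucc, Fin.val_last]; omega)
        rw [Fin.le_def] at h1
        omega
      have hIdx : ∀ (a b : Fin (k+3)), (a:ℕ) = (b:ℕ) → I a = I b :=
        fun a b h => congrArg I (Fin.ext h)
      funext j
      apply Fin.ext
      by_cases hj : (j:ℕ) ≤ k+1
      · rw [mapA'_val_pos n k _ j hj, mapA_val_pos n k I j hj]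
        have := hle j hj
        omega
      · rw [mapA'_val_neg n k _ j hj]
        have hjv : (j:ℕ) = k+2 := by have := j.isLt; omega
        rw [hIdx j (Fin.last (k+2)) (by simp [Fin.val_last, hjv]), hl]
    · -- right inverse
      intro J hJ
      simp only [Finset.mem_filter, Finset.mem_univ, true_and] at hJ
      obtain ⟨hJ0, hJl, hJs⟩ := hJ
      have hJle : ∀ j : Fin (k+3), (j:ℕ) ≤ k+1 → (J j : ℕ) ≤ n := by
        intro j hj
        have h1 : J j < J (Fin.last (k+2)) := hJs (by rw [Fin.lt_def]; simp [Fin.val_last]; omega)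
        rw [Fin.lt_def, hJl] at h1
        omega
      have hJdx : ∀ (a b : Fin (k+3)), (a:ℕ) = (b:ℕ) → J a = J b :=
        fun a b h => congrArg J (Fin.ext h)
      funext j
      apply Fin.ext
      by_cases hj : (j:ℕ) ≤ k+1
      · rw [mapA_val_pos n k _ j hj, mapA'_val_pos n k J j hj]
        have := hJle j hj
        omega
      · rw [mapA_val_neg n k _ j hj]
        have hjv : (j:ℕ) = k+2 := by have := j.isLt; omega
        rw [hJdx j (Fin.last (k+2)) (by simp [Fin.val_last, hjv]), hJl]
    · -- term equality
      intro I hI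
      simp only [Finset.mem_filter, Finset.mem_univ, true_and] at hI
      obtain ⟨⟨h0, hl, hs⟩, hq⟩ := hI
      have hlt : (I ((Fin.last (k+1)).castSucc) : ℕ) ≤ n := by
        have h1 : I ((Fin.last (k+1)).castSucc) < I (Fin.last (k+2)) :=
          hs (Fin.castSucc_lt_last _)
        rw [Fin.lt_def, hl] at h1
        omega
      have hle : ∀ j : Fin (k+3), (j:ℕ) ≤ k+1 → (I j : ℕ) ≤ n := by
        intro j hj
        have h1 : I j ≤ I ((Fin.last (k+1)).castSucc) :=
          hs.monotone (by rw [Fin.le_def]; simp [Fin.coe_castSucc, Fin.val_last]; omega)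
        rw [Fin.le_def] at h1
        omega
      have hprodA : (∏ s : Fin (k+1), (((mapA n k I) s.succ.castSucc : ℕ) - (s : ℕ)))
          = ∏ s : Fin (k+1), ((I s.succ.castSucc : ℕ) - (s : ℕ)) := by
        refine Finset.prod_congr rfl ?_
        intro s _
        rw [mapA_val_pos n k I s.succ.castSucc
          (by simp [Fin.coe_castSucc, Fin.val_succ]; omega)]
        have := hle s.succ.castSucc (by simp [Fin.coe_castSucc, Fin.val_succ]; omega)
        omega
      have hprodB : (∏ s : Fin (k+2), (d + 1 - (s : ℕ)) ^
            (((mapA n k I) s.succ : ℕ) - ((mapA n k I) s.castSucc : ℕ) - 1))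
          = (∏ s : Fin (k+1), (d + 1 - ((s.castSucc) : ℕ)) ^
              ((I s.castSucc.succ : ℕ) - (I s.castSucc.castSucc : ℕ) - 1))
            * (d - k) ^ (n + 1 - (I ((Fin.last (k+1)).castSucc) : ℕ) - 1) := by
        rw [Fin.prod_univ_castSucc (fun s : Fin (k+2) => (d + 1 - (s : ℕ)) ^
            (((mapA n k I) s.succ : ℕ) - ((mapA n k I) s.castSucc : ℕ) - 1))]
        congr 1
        · refine Finset.prod_congr rfl ?_
          intro s _
          rw [mapA_val_pos n k I s.castSucc.succ
            (by simp [Fin.coe_castSucc, Fin.val_succ]; omega)]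
          rw [mapA_val_pos n k I s.castSucc.castSucc
            (by simp only [Fin.coe_castSucc]; omega)]
          have h1 := hle s.castSucc.succ (by simp [Fin.coe_castSucc, Fin.val_succ]; omega)
          have h2 := hle s.castSucc.castSucc (by simp only [Fin.coe_castSucc]; omega)
          congr 1
          omega
        · rw [Fin.succ_last]
          rw [mapA_val_neg n k I (Fin.last (k+2)) (by simp [Fin.val_last])]
          rw [mapA_val_pos n k I ((Fin.last (k+1)).castSucc)
            (by simp [Fin.coe_castSucc, Fin.val_last])]
          rw [Fin.val_last]
          congr 1
          · omega
          · omega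
      have hsplit : (∏ s : Fin (k+2), (d + 1 - (s : ℕ)) ^
            ((I s.succ : ℕ) - (I s.castSucc : ℕ) - 1))
          = (∏ s : Fin (k+1), (d + 1 - ((s.castSucc) : ℕ)) ^
              ((I s.castSucc.succ : ℕ) - (I s.castSucc.castSucc : ℕ) - 1))
            * (d - k) ^ ((n + 1 - (I ((Fin.last (k+1)).castSucc) : ℕ) - 1) + 1) := by
        rw [Fin.prod_univ_castSucc (fun s : Fin (k+2) => (d + 1 - (s : ℕ)) ^
            ((I s.succ : ℕ) - (I s.castSucc : ℕ) - 1))]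
        congr 1
        rw [Fin.succ_last, hl, Fin.val_last]
        congr 1
        · omega
        · omega
      rw [hprodA, hprodB, hsplit, pow_succ]
      ring
  rw [hB, hA]
  exact Nat.add_comm _ _

lemma Sf_eq_Pf (d : ℕ) : ∀ n k, Sf d n k = Pf d n k := by
  intro n
  induction n with
  | zero =>
    intro k
    cases k with
    | zero =>
      rw [Sf_k0]
      rfl
    | succ k =>
      rw [Sf_n0, Pf_of_lt d 0 (k+1) (by omega)]
  | succ n ih =>
    intro k
    cases k with
    | zero =>
      rw [Sf_k0]
      rfl
    | succ k =>
      rw [Sf_succ, ih (k+1), ih k]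
      rfl

open Classical in
theorem kloeve_strict_sum (d m : ℕ) (hm : 1 ≤ m) (hmd : m ≤ d) :
    ∑ I ∈ Finset.univ.filter (fun I : Fin (m + 2) → Fin (d + 2) =>
        (I 0 : ℕ) = 0 ∧ (I (Fin.last (m + 1)) : ℕ) = d + 1 ∧ StrictMono I),
      ((∏ s : Fin m, ((I s.succ.castSucc : ℕ) - (s : ℕ))) *
        ∏ s : Fin (m + 1),
          (d + 1 - (s : ℕ)) ^ ((I s.succ : ℕ) - (I s.castSucc : ℕ) - 1))
      = Nat.choose d m * (d - m + 1) ^ d := by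
  have h1 : Sf d d m = Nat.choose d m * (d - m + 1) ^ d := by
    rw [Sf_eq_Pf d d m, Pf_top d m hm hmd]
  exact h1
end

section
/- For any positive integer d, the function Ω_d(x) (the permanent of the d×2d matrix A_{d,x}) is a polynomial in x of degree d with leading coefficient 1, i.e., the coefficient of x^d in Ω_d(x) is 1. -/
open Classical in
/-- `Ω_d` as a polynomial in `x`: the permanent-type sum of the `d × 2d`
matrix `A_{d,X}` over injective sequences `ρ` with `ρ i ≤ d + i`
(0-indexed rows and columns). -/
noncomputable def OmegaPoly (d : ℕ) : Polynomial ℝ :=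
  ∑ ρ ∈ Finset.univ.filter (fun ρ : Fin d → Fin (2 * d) =>
      Function.Injective ρ ∧ ∀ i : Fin d, (ρ i : ℕ) ≤ d + (i : ℕ)),
    ∏ i : Fin d,
      (if (i : ℕ) + (ρ i : ℕ) < d then Polynomial.X
       else if (ρ i : ℕ) ≤ d + (i : ℕ) then 1 else 0)

open Polynomial Finset in
open Classical in
lemma OmegaPoly_eq (d : ℕ) :
    OmegaPoly d = ∑ ρ ∈ Finset.univ.filter (fun ρ : Fin d → Fin (2 * d) =>
      Function.Injective ρ ∧ ∀ i : Fin d, (ρ i : ℕ) ≤ d + (i : ℕ)),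
      (X : Polynomial ℝ) ^
        (Finset.univ.filter (fun i : Fin d => (i : ℕ) + (ρ i : ℕ) < d)).card := by
  unfold OmegaPoly
  refine Finset.sum_congr rfl ?_
  intro ρ hρ
  rw [Finset.mem_filter] at hρ
  obtain ⟨-, -, hb⟩ := hρ
  have : ∀ i : Fin d,
      (if (i : ℕ) + (ρ i : ℕ) < d then (X : Polynomial ℝ)
       else if (ρ i : ℕ) ≤ d + (i : ℕ) then 1 else 0)
      = (if (i : ℕ) + (ρ i : ℕ) < d then (X : Polynomial ℝ) else 1) := by
    intro i
    by_cases hp : (i : ℕ) + (ρ i : ℕ) < d <;> simp [hp, hb i]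
  rw [Finset.prod_congr rfl fun i _ => this i]
  simp [Finset.prod_ite, Finset.prod_const]

open Polynomial Finset in
open Classical in
lemma unique_max (d : ℕ) (ρ : Fin d → Fin (2 * d)) (hinj : Function.Injective ρ)
    (hall : ∀ i : Fin d, (i : ℕ) + (ρ i : ℕ) < d) :
    ρ = fun i : Fin d => Fin.castLE (by omega) i.rev := by
  have hlt : ∀ i : Fin d, (ρ i : ℕ) < d := fun i => by have := hall i; omega
  set g : Fin d → Fin d := fun i => ⟨(ρ i : ℕ), hlt i⟩ with hg
  have hginj : Function.Injective g := by
    intro a b hab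
    apply hinj
    apply Fin.ext
    have h := congrArg Fin.val hab
    exact h
  have hbij : Function.Bijective g := (Finite.injective_iff_bijective).mp hginj
  have hsum : ∑ i : Fin d, (g i : ℕ) = ∑ i : Fin d, (i : ℕ) :=
    Equiv.sum_comp (Equiv.ofBijective g hbij) (fun j : Fin d => (j : ℕ))
  have hsumrev : ∑ i : Fin d, ((i : Fin d).rev : ℕ) = ∑ i : Fin d, (i : ℕ) :=
    Equiv.sum_comp Fin.revPerm (fun j : Fin d => (j : ℕ))
  have hle : ∀ i ∈ (Finset.univ : Finset (Fin d)), (g i : ℕ) ≤ ((i : Fin d).rev : ℕ) := by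
    intro i _
    have h1 := hall i
    have h2 : ((i : Fin d).rev : ℕ) = d - (i + 1) := Fin.val_rev i
    simp only [hg]
    omega
  have heq : ∀ i ∈ (Finset.univ : Finset (Fin d)), (g i : ℕ) = ((i : Fin d).rev : ℕ) :=
    (Finset.sum_eq_sum_iff_of_le hle).mp (by rw [hsum, hsumrev])
  funext i
  apply Fin.ext
  have := heq i (Finset.mem_univ i)
  simpa [hg] using this

open Polynomial Finset in
open Classical in
theorem OmegaPoly_monic (d : ℕ) (hd : 0 < d) :
    (OmegaPoly d).natDegree = d ∧ (OmegaPoly d).coeff d = 1 := by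
  set S := Finset.univ.filter (fun ρ : Fin d → Fin (2 * d) =>
      Function.Injective ρ ∧ ∀ i : Fin d, (ρ i : ℕ) ≤ d + (i : ℕ)) with hS
  set k : (Fin d → Fin (2 * d)) → ℕ := fun ρ =>
      (Finset.univ.filter (fun i : Fin d => (i : ℕ) + (ρ i : ℕ) < d)).card with hk
  have hO : OmegaPoly d = ∑ ρ ∈ S, (X : Polynomial ℝ) ^ k ρ := OmegaPoly_eq d
  have hkle : ∀ ρ, k ρ ≤ d := by
    intro ρ
    calc k ρ ≤ (Finset.univ : Finset (Fin d)).card := Finset.card_filter_le _ _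
    _ = d := by simp
  set ρ₀ : Fin d → Fin (2 * d) := fun i => Fin.castLE (by omega) i.rev with hρ₀
  have hρ₀mem : ρ₀ ∈ S := by
    rw [hS, Finset.mem_filter]
    refine ⟨Finset.mem_univ _, ?_, ?_⟩
    · intro a b hab
      apply Fin.rev_injective
      apply Fin.ext
      have h := congrArg Fin.val hab
      exact h
    · intro i
      have : (i.rev : ℕ) = d - (i + 1) := Fin.val_rev i
      simp only [hρ₀, Fin.coe_castLE]
      omega
  have hkρ₀ : k ρ₀ = d := by
    have : (Finset.univ.filter (fun i : Fin d => (i : ℕ) + (ρ₀ i : ℕ) < d)) = Finset.univ := by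
      refine Finset.filter_true_of_mem ?_
      intro i _
      have h1 : (i.rev : ℕ) = d - (i + 1) := Fin.val_rev i
      have h2 : (i : ℕ) < d := i.isLt
      simp only [hρ₀, Fin.coe_castLE]
      omega
    simp only [hk, this, Finset.card_univ, Fintype.card_fin]
  -- the filter of maximal terms is exactly {ρ₀}
  have hfilter : S.filter (fun ρ => d = k ρ) = {ρ₀} := by
    apply Finset.eq_singleton_iff_unique_mem.mpr
    constructor
    · rw [Finset.mem_filter]; exact ⟨hρ₀mem, hkρ₀.symm⟩
    · intro ρ hρ
      rw [Finset.mem_filter, hS, Finset.mem_filter] at hρ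
      obtain ⟨⟨-, hinj, -⟩, hkd⟩ := hρ
      have hcard : (Finset.univ.filter (fun i : Fin d => (i : ℕ) + (ρ i : ℕ) < d)).card = d := by
        simp only [hk] at hkd; omega
      have hfull : (Finset.univ.filter (fun i : Fin d => (i : ℕ) + (ρ i : ℕ) < d))
          = Finset.univ := Finset.eq_univ_of_card _ (by simp [hcard])
      have hall : ∀ i : Fin d, (i : ℕ) + (ρ i : ℕ) < d := by
        intro i
        have := Finset.mem_filter.mp (hfull ▸ Finset.mem_univ i)
        exact this.2
      exact unique_max d ρ hinj hall
  have hcoeff : (OmegaPoly d).coeff d = 1 := by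
    rw [hO, Polynomial.finset_sum_coeff]
    have : ∀ ρ ∈ S, ((X : Polynomial ℝ) ^ k ρ).coeff d = if d = k ρ then 1 else 0 :=
      fun ρ _ => Polynomial.coeff_X_pow _ _
    rw [Finset.sum_congr rfl this, ← Finset.sum_filter, hfilter]
    simp
  refine ⟨?_, hcoeff⟩
  have hdegle : (OmegaPoly d).natDegree ≤ d := by
    rw [hO]
    refine Polynomial.natDegree_sum_le_of_forall_le _ _ ?_
    intro ρ _
    rw [Polynomial.natDegree_X_pow]
    exact hkle ρ
  have hdegge : d ≤ (OmegaPoly d).natDegree :=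
    Polynomial.le_natDegree_of_ne_zero (by rw [hcoeff]; exact one_ne_zero)
  omega
end
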